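/- arXiv:2509.09589 — 6 statements merged into one kernel-verified Lean document; each statement's English description precedes it below -/
import Mathlib

section
/- There exist a constant C > 0 and a threshold n₀ ≥ 1, both depending only on A_1, A_2, L, d, α and θ, such that |(1 − m_n^{(n)})·ζ_n·L^{−n(d−θ)} − 1| ≤ C·L^{−nd} for all n ≥ n₀; in particular there exist constants c, C' > 0 depending only on A_1, A_2, L, d, α and θ such that c·L^{−n(θ−α)} ≤ 1 − m_n^{(n)} ≤ C'·L^{−n(θ−α)} for all n ≥ n₀. -/
open MeasureTheory ProbabilityTheory Filter Finset
open scoped ENNReal Classical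

noncomputable section

/-- The hierarchical lattice `H^d_L`: the direct sum of countably many copies of `(ZMod L)^d`. -/
abbrev HLat (d L : ℕ) : Type := ℕ →₀ (Fin d → ZMod L)

/-- `hnorm x = 0` if `x = 0`, and `hnorm x = L^(i+1)` if `x i ≠ 0` and `x j = 0` for `j > i`
(coordinates indexed from `0`, matching the paper's indexing from `1`). -/
def hnorm {d L : ℕ} (x : HLat d L) : ℕ :=
  x.support.sup fun i => L ^ (i + 1)

/-- The ball `Λ_n = {x : ‖x‖ ≤ L^n}`. -/
def Lambda (d L n : ℕ) : Set (HLat d L) := {x | hnorm x ≤ L ^ n}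

/-- The defining equation for `ζ_n`:
`(L^d - 1) · ∑_{i=1}^n L^((i-1)d) exp(-z⁻¹ ρ(L^i)) = L^(nd) - 2`. -/
def zetaEq (d L : ℕ) (ρ : ℝ → ℝ) (n : ℕ) (z : ℝ) : Prop :=
  ((L : ℝ) ^ d - 1) *
      ∑ i ∈ Finset.Icc 1 n, (L : ℝ) ^ ((i - 1) * d) * Real.exp (-z⁻¹ * ρ ((L : ℝ) ^ i))
    = (L : ℝ) ^ (n * d) - 2

/-- `ρ⁻(r) = max{ρ(r) - L^(-nθ), 0}`. -/
def rhoMinus (L : ℕ) (θ : ℝ) (ρ : ℝ → ℝ) (n : ℕ) (r : ℝ) : ℝ :=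
  max (ρ r - (L : ℝ) ^ (-(n : ℝ) * θ)) 0

/-- `p⁻_r = 1 - exp(-ζ_n⁻¹ ρ⁻(r))`. -/
def pMinus (L : ℕ) (θ : ℝ) (ρ : ℝ → ℝ) (ζ : ℕ → ℝ) (n : ℕ) (r : ℝ) : ℝ :=
  1 - Real.exp (-(ζ n)⁻¹ * rhoMinus L θ ρ n r)

/-- `m_j^{(n)} = (L^d - 1) · ∑_{i=1}^j L^((i-1)d) p⁻_{L^i}`. -/
def mjn (d L : ℕ) (θ : ℝ) (ρ : ℝ → ℝ) (ζ : ℕ → ℝ) (n j : ℕ) : ℝ :=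
  ((L : ℝ) ^ d - 1) *
    ∑ i ∈ Finset.Icc 1 j, (L : ℝ) ^ ((i - 1) * d) * pMinus L θ ρ ζ n ((L : ℝ) ^ i)

lemma geom_aux (x : ℝ) (d : ℕ) : ∀ n : ℕ,
    (x ^ d - 1) * ∑ i ∈ Finset.Icc 1 n, x ^ ((i - 1) * d) = x ^ (n * d) - 1 := by
  intro n
  induction n with
  | zero => simp
  | succ n ih =>
      rw [Finset.sum_Icc_succ_top (by omega : 1 ≤ n + 1), mul_add, ih]
      have : (n + 1 - 1) * d = n * d := by simp
      rw [this, add_mul, pow_add, one_mul]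
      ring

lemma exp_neg_le_quad {x : ℝ} (hx : 0 ≤ x) : Real.exp (-x) ≤ 1 - x + x ^ 2 / 2 := by
  have h := Real.quadratic_le_exp_of_nonneg hx
  have hE : 0 < Real.exp (-x) := Real.exp_pos _
  have h1 : Real.exp (-x) * (1 + x + x ^ 2 / 2) ≤ 1 := by
    calc Real.exp (-x) * (1 + x + x ^ 2 / 2) ≤ Real.exp (-x) * Real.exp x :=
          mul_le_mul_of_nonneg_left h hE.le
      _ = 1 := by rw [← Real.exp_add]; simp
  nlinarith [sq_nonneg x, sq_nonneg (x * x), hE.le]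

set_option maxHeartbeats 1000000 in
/-- `1 - m_n^{(n)} = (1 + O(L^{-nd})) ζ_n^{-1} L^{n(d-θ)}`; in particular
`1 - m_n^{(n)} ≍ L^{-n(θ-α)}`. -/
theorem one_minus_m_n_asymptotics
    (d L : ℕ) (hd : 1 ≤ d) (hL : 2 ≤ L)
    (A1 A2 α : ℝ) (hA1 : 0 < A1) (hA12 : A1 ≤ A2)
    (hα0 : 0 < α) (hαd : α < (d : ℝ))
    (ρ : ℝ → ℝ) (hρ0 : ρ 0 = 0)
    (hρnn : ∀ r : ℝ, 0 ≤ r → 0 ≤ ρ r)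
    (hρlb : ∀ r : ℝ, 1 ≤ r → A1 * r ^ (-α) ≤ ρ r)
    (hρub : ∀ r : ℝ, 1 ≤ r → ρ r ≤ A2 * r ^ (-α))
    (θ : ℝ) (hα56 : α < 5 * (d : ℝ) / 6) (hθα : α < θ)
    (hθ1 : α ≤ (d : ℝ) / 2 → θ < 4 * α / 3)
    (hθ2 : (d : ℝ) / 2 < α → α ≤ 2 * (d : ℝ) / 3 → θ < 2 * α - (d : ℝ) / 2)
    (hθ3 : 2 * (d : ℝ) / 3 < α → θ < 5 * α / 2 - (d : ℝ))
    (ζ : ℕ → ℝ) (hζpos : ∀ n : ℕ, 1 ≤ n → 0 < ζ n)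
    (hζeq : ∀ n : ℕ, 1 ≤ n → zetaEq d L ρ n (ζ n))
 :
    ∃ C : ℝ, 0 < C ∧ ∃ n₀ : ℕ, 1 ≤ n₀ ∧
      (∀ n : ℕ, n₀ ≤ n →
        |(1 - mjn d L θ ρ ζ n n) * ζ n * (L : ℝ) ^ (-(n : ℝ) * ((d : ℝ) - θ)) - 1| ≤
          C * (L : ℝ) ^ (-(n : ℝ) * (d : ℝ))) ∧
      ∃ c C' : ℝ, 0 < c ∧ 0 < C' ∧ ∀ n : ℕ, n₀ ≤ n →
        c * (L : ℝ) ^ (-(n : ℝ) * (θ - α)) ≤ 1 - mjn d L θ ρ ζ n n ∧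
        1 - mjn d L θ ρ ζ n n ≤ C' * (L : ℝ) ^ (-(n : ℝ) * (θ - α)) := by
  -- basic setup
  set b : ℝ := (L : ℝ) with hbdef
  have hb1 : (1 : ℝ) < b := by
    have : (2 : ℝ) ≤ (L : ℝ) := by exact_mod_cast hL
    linarith
  have hb0 : (0 : ℝ) < b := lt_trans one_pos hb1
  have hd1 : (1 : ℝ) ≤ (d : ℝ) := by exact_mod_cast hd
  have hq1 : (1 : ℝ) < b ^ d := one_lt_pow₀ hb1 (by omega)
  have hrpos : ∀ x : ℝ, 0 < b ^ x := fun x => Real.rpow_pos_of_pos hb0 x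
  have hrle : ∀ {x y : ℝ}, x ≤ y → b ^ x ≤ b ^ y := fun hxy =>
    Real.rpow_le_rpow_of_exponent_le hb1.le hxy
  have hnpow : ∀ m : ℕ, (b : ℝ) ^ m = b ^ (m : ℝ) := fun m =>
    (Real.rpow_natCast b m).symm
  have hpow : ∀ (c : ℝ) (m : ℕ), ((b : ℝ) ^ c) ^ m = b ^ (c * m) := by
    intro c m
    rw [← Real.rpow_natCast (b ^ c) m, ← Real.rpow_mul hb0.le]
  have hradd : ∀ x y : ℝ, b ^ (x + y) = b ^ x * b ^ y := fun x y =>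
    Real.rpow_add hb0 x y
  have hrneg : ∀ x : ℝ, b ^ (-x) = (b ^ x)⁻¹ := fun x => Real.rpow_neg hb0.le x
  have hrle1 : ∀ {x : ℝ}, x ≤ 0 → b ^ x ≤ 1 := by
    intro x hx
    calc b ^ x ≤ b ^ (0:ℝ) := hrle hx
      _ = 1 := Real.rpow_zero b
  set r : ℝ := b ^ ((d : ℝ) - α) with hrdef
  have hr1 : 1 < r := Real.one_lt_rpow_iff_of_pos hb0 |>.2 (Or.inl ⟨hb1, by linarith⟩)
  have hr0 : 0 < r := lt_trans one_pos hr1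
  -- the geometric identity
  have hgeom : ∀ n : ℕ, (b ^ d - 1) * ∑ i ∈ Finset.Icc 1 n, b ^ ((i - 1) * d)
      = b ^ (n * d) - 1 := geom_aux b d
  -- per-term upper bound
  have hbige : ∀ i : ℕ, (1:ℝ) ≤ b ^ i := fun i => one_le_pow₀ hb1.le
  have hcast1 : ∀ i : ℕ, 1 ≤ i → (((i - 1) * d : ℕ) : ℝ) = ((i:ℝ) - 1) * d := by
    intro i hi
    push_cast [Nat.cast_sub hi]
    ring
  have hcast2 : ∀ i : ℕ, 1 ≤ i → (((i - 1 : ℕ)) : ℝ) = (i:ℝ) - 1 := by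
    intro i hi
    push_cast [Nat.cast_sub hi]
    ring
  have hbpow2 : ∀ i : ℕ, ((b:ℝ) ^ i) ^ (-α) = b ^ ((i:ℝ) * (-α)) := by
    intro i
    rw [hnpow i, ← Real.rpow_mul hb0.le]
  have hterm_ub : ∀ i : ℕ, 1 ≤ i →
      b ^ ((i - 1) * d) * ρ (b ^ i) ≤ A2 * r ^ (i - 1) := by
    intro i hi
    have h := hρub _ (hbige i)
    have hA20 : 0 < A2 := lt_of_lt_of_le hA1 hA12
    have key : b ^ ((i - 1) * d) * ((b:ℝ) ^ i) ^ (-α) ≤ r ^ (i - 1) := by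
      rw [hbpow2 i, hnpow ((i-1)*d), ← hradd, hrdef, hpow]
      apply hrle
      rw [hcast1 i hi, hcast2 i hi]
      have : (0:ℝ) ≤ α := hα0.le
      have hi1' : (1:ℝ) ≤ (i:ℝ) := by exact_mod_cast hi
      nlinarith
    calc b ^ ((i - 1) * d) * ρ (b ^ i)
        ≤ b ^ ((i - 1) * d) * (A2 * ((b:ℝ) ^ i) ^ (-α)) :=
          mul_le_mul_of_nonneg_left h (by positivity)
      _ = A2 * (b ^ ((i - 1) * d) * ((b:ℝ) ^ i) ^ (-α)) := by ring
      _ ≤ A2 * r ^ (i - 1) := mul_le_mul_of_nonneg_left key hA20.le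
  -- per-term square bound
  have hterm_sq : ∀ n i : ℕ, 1 ≤ i → i ≤ n →
      b ^ ((i - 1) * d) * ρ (b ^ i) ^ 2 ≤ A2 ^ 2 * b ^ (max ((n:ℝ) * ((d:ℝ) - 2*α)) 0) := by
    intro n i hi hin
    have hA20 : 0 < A2 := lt_of_lt_of_le hA1 hA12
    have h := hρub _ (hbige i)
    have hρnn' : 0 ≤ ρ (b ^ i) := hρnn _ (by positivity)
    have hsq : ρ (b ^ i) ^ 2 ≤ A2 ^ 2 * (((b:ℝ) ^ i) ^ (-α)) ^ 2 := by
      have := mul_self_le_mul_self hρnn' h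
      calc ρ (b ^ i) ^ 2 = ρ (b ^ i) * ρ (b ^ i) := sq (ρ (b^i)) ▸ by ring
        _ ≤ (A2 * ((b:ℝ) ^ i) ^ (-α)) * (A2 * ((b:ℝ) ^ i) ^ (-α)) := this
        _ = A2 ^ 2 * (((b:ℝ) ^ i) ^ (-α)) ^ 2 := by ring
    have key : b ^ ((i - 1) * d) * (((b:ℝ) ^ i) ^ (-α)) ^ 2
        ≤ b ^ (max ((n:ℝ) * ((d:ℝ) - 2*α)) 0) := by
      rw [hbpow2 i, hpow, hnpow ((i-1)*d), ← hradd]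
      apply hrle
      rw [hcast1 i hi]
      have hin' : (i:ℝ) ≤ (n:ℝ) := Nat.cast_le.mpr hin
      have hi1' : (1:ℝ) ≤ (i:ℝ) := Nat.one_le_cast.mpr hi
      rcases le_or_gt 0 ((d:ℝ) - 2*α) with hc | hc
      · have h1 : ((i:ℝ) - 1) * d + (i:ℝ) * (-α) * 2 ≤ (n:ℝ) * ((d:ℝ) - 2*α) := by
          nlinarith
        exact h1.trans (le_max_left _ _)
      · have h1 : ((i:ℝ) - 1) * d + (i:ℝ) * (-α) * 2 ≤ 0 := by nlinarith
        exact h1.trans (le_max_right _ _)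
    calc b ^ ((i - 1) * d) * ρ (b ^ i) ^ 2
        ≤ b ^ ((i - 1) * d) * (A2 ^ 2 * (((b:ℝ) ^ i) ^ (-α)) ^ 2) :=
          mul_le_mul_of_nonneg_left hsq (by positivity)
      _ = A2 ^ 2 * (b ^ ((i - 1) * d) * (((b:ℝ) ^ i) ^ (-α)) ^ 2) := by ring
      _ ≤ A2 ^ 2 * b ^ (max ((n:ℝ) * ((d:ℝ) - 2*α)) 0) :=
          mul_le_mul_of_nonneg_left key (by positivity)
  -- per-term lower bound at i = n
  have hterm_lb : ∀ n : ℕ, 1 ≤ n →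
      A1 * b ^ (-(d:ℝ)) * r ^ n ≤ b ^ ((n - 1) * d) * ρ (b ^ n) := by
    intro n hn
    have h := hρlb _ (hbige n)
    have key : A1 * b ^ (-(d:ℝ)) * r ^ n ≤ b ^ ((n - 1) * d) * (A1 * ((b:ℝ) ^ n) ^ (-α)) := by
      rw [hbpow2 n, hnpow ((n-1)*d), hrdef, hpow]
      rw [show b ^ ((((n-1)*d : ℕ)):ℝ) * (A1 * b ^ ((n:ℝ) * (-α)))
            = A1 * b ^ (((((n-1)*d : ℕ)):ℝ) + (n:ℝ) * (-α)) from by rw [hradd]; ring]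
      rw [show A1 * b ^ (-(d:ℝ)) * b ^ (((d:ℝ)-α) * (n:ℝ))
            = A1 * b ^ (-(d:ℝ) + ((d:ℝ)-α) * (n:ℝ)) from by rw [hradd]; ring]
      apply mul_le_mul_of_nonneg_left _ hA1.le
      apply hrle
      rw [hcast1 n hn]
      linarith
    exact key.trans (mul_le_mul_of_nonneg_left h (by positivity))
  have hA20 : 0 < A2 := lt_of_lt_of_le hA1 hA12
  -- geometric sum bound
  have hsum_geom : ∀ n : ℕ, ∑ i ∈ Finset.Icc 1 n, r ^ (i - 1) ≤ r ^ n / (r - 1) := by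
    intro n
    have h := geom_aux r 1 n
    simp only [mul_one, pow_one] at h
    rw [le_div_iff₀ (by linarith)]
    rw [mul_comm]
    rw [h]
    have : (0:ℝ) < r ^ n := pow_pos hr0 n
    linarith
  -- the first-moment sum
  set B : ℝ := (b ^ d - 1) * A2 / (r - 1) with hBdef
  have hB0 : 0 < B := by
    apply div_pos (mul_pos (by linarith) hA20) (by linarith)
  have hMub : ∀ n : ℕ,
      (b ^ d - 1) * ∑ i ∈ Finset.Icc 1 n, b ^ ((i - 1) * d) * ρ (b ^ i) ≤ B * r ^ n := by
    intro n
    have h1 : ∑ i ∈ Finset.Icc 1 n, b ^ ((i - 1) * d) * ρ (b ^ i)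
        ≤ ∑ i ∈ Finset.Icc 1 n, A2 * r ^ (i - 1) := by
      apply Finset.sum_le_sum
      intro i hi
      exact hterm_ub i (Finset.mem_Icc.mp hi).1
    have h2 : ∑ i ∈ Finset.Icc 1 n, A2 * r ^ (i - 1) ≤ A2 * (r ^ n / (r - 1)) := by
      rw [← Finset.mul_sum]
      exact mul_le_mul_of_nonneg_left (hsum_geom n) hA20.le
    calc (b ^ d - 1) * ∑ i ∈ Finset.Icc 1 n, b ^ ((i - 1) * d) * ρ (b ^ i)
        ≤ (b ^ d - 1) * (A2 * (r ^ n / (r - 1))) :=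
          mul_le_mul_of_nonneg_left (h1.trans h2) (by linarith)
      _ = B * r ^ n := by rw [hBdef]; field_simp
  have hMnn : ∀ n : ℕ,
      0 ≤ (b ^ d - 1) * ∑ i ∈ Finset.Icc 1 n, b ^ ((i - 1) * d) * ρ (b ^ i) := by
    intro n
    apply mul_nonneg (by linarith)
    apply Finset.sum_nonneg
    intro i hi
    exact mul_nonneg (pow_nonneg hb0.le _) (hρnn _ (by positivity))
  -- upper bound for ζ
  have hζub : ∀ n : ℕ, 1 ≤ n → ζ n ≤ B * r ^ n := by
    intro n hn
    have heq := hζeq n hn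
    unfold zetaEq at heq
    have hζ0 := hζpos n hn
    have hlow : ∀ i ∈ Finset.Icc 1 n,
        b ^ ((i - 1) * d) * (1 - (ζ n)⁻¹ * ρ (b ^ i))
          ≤ b ^ ((i - 1) * d) * Real.exp (-(ζ n)⁻¹ * ρ (b ^ i)) := by
      intro i hi
      apply mul_le_mul_of_nonneg_left _ (pow_nonneg hb0.le _)
      have := Real.add_one_le_exp (-(ζ n)⁻¹ * ρ (b ^ i))
      linarith
    have hsumlow := Finset.sum_le_sum hlow
    have hexpand : ∑ i ∈ Finset.Icc 1 n, b ^ ((i - 1) * d) * (1 - (ζ n)⁻¹ * ρ (b ^ i))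
        = (∑ i ∈ Finset.Icc 1 n, b ^ ((i - 1) * d))
          - (ζ n)⁻¹ * ∑ i ∈ Finset.Icc 1 n, b ^ ((i - 1) * d) * ρ (b ^ i) := by
      rw [Finset.mul_sum, ← Finset.sum_sub_distrib]
      apply Finset.sum_congr rfl
      intro i _
      ring
    rw [hexpand] at hsumlow
    have hkey : b ^ (n * d) - 1
        - (ζ n)⁻¹ * ((b ^ d - 1) * ∑ i ∈ Finset.Icc 1 n, b ^ ((i - 1) * d) * ρ (b ^ i))
        ≤ b ^ (n * d) - 2 := by
      rw [← heq, ← hgeom n]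
      have := mul_le_mul_of_nonneg_left hsumlow (by linarith : (0:ℝ) ≤ b ^ d - 1)
      rw [mul_sub] at this
      linarith [this]
    have h1 : 1 ≤ (ζ n)⁻¹ * ((b ^ d - 1) * ∑ i ∈ Finset.Icc 1 n, b ^ ((i - 1) * d) * ρ (b ^ i)) := by
      linarith
    have h2 : ζ n ≤ (b ^ d - 1) * ∑ i ∈ Finset.Icc 1 n, b ^ ((i - 1) * d) * ρ (b ^ i) := by
      have := mul_le_mul_of_nonneg_left h1 hζ0.le
      rwa [mul_one, ← mul_assoc, mul_inv_cancel₀ hζ0.ne', one_mul] at this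
    exact h2.trans (hMub n)
  -- lower bound for ζ
  set ε : ℝ := A1 * b ^ (-(d:ℝ)) * (b ^ d - 1) / 2 with hεdef
  have hε0 : 0 < ε := by
    apply div_pos (mul_pos (mul_pos hA1 (hrpos _)) (by linarith)) (by norm_num)
  set δ : ℝ := min (d:ℝ) (2 * ((d:ℝ) - α)) with hδdef
  have hδ0 : 0 < δ := lt_min (by linarith) (by linarith)
  set s : ℝ := b ^ (-δ) with hsdef
  have hs0 : 0 < s := hrpos _
  have hs1 : s < 1 := Real.rpow_lt_one_of_one_lt_of_neg hb1 (by linarith)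
  have htend : Tendsto (fun n : ℕ => A2 ^ 2 * (b ^ d - 1) / (2 * ε ^ 2) * ((n : ℝ) * s ^ n))
      atTop (nhds 0) := by
    have h := tendsto_self_mul_const_pow_of_lt_one hs0.le hs1
    have := h.const_mul (A2 ^ 2 * (b ^ d - 1) / (2 * ε ^ 2))
    simpa using this
  have hev1 : ∀ᶠ n : ℕ in atTop,
      A2 ^ 2 * (b ^ d - 1) / (2 * ε ^ 2) * ((n : ℝ) * s ^ n) ≤ 1 / 2 :=
    htend.eventually (eventually_le_nhds (by norm_num))
  obtain ⟨n₁, hn₁⟩ := eventually_atTop.mp hev1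
  have hζlb : ∀ n : ℕ, n₁ ≤ n → 1 ≤ n → ε * r ^ n ≤ ζ n := by
    intro n hnn₁ hn
    by_contra hcon
    push_neg at hcon
    have hz0 : 0 < ε * r ^ n := mul_pos hε0 (pow_pos hr0 n)
    set z : ℝ := ε * r ^ n with hzdef
    have hζ0 := hζpos n hn
    have heq := hζeq n hn
    unfold zetaEq at heq
    have hup : ∀ i ∈ Finset.Icc 1 n,
        b ^ ((i - 1) * d) * Real.exp (-(ζ n)⁻¹ * ρ (b ^ i))
          ≤ b ^ ((i - 1) * d) * (1 - z⁻¹ * ρ (b ^ i) + (z⁻¹ * ρ (b ^ i)) ^ 2 / 2) := by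
      intro i hi
      have hρn : 0 ≤ ρ (b ^ i) := hρnn _ (by positivity)
      apply mul_le_mul_of_nonneg_left _ (pow_nonneg hb0.le _)
      have hinv : z⁻¹ ≤ (ζ n)⁻¹ := inv_anti₀ hζ0 hcon.le
      have hmono : Real.exp (-(ζ n)⁻¹ * ρ (b ^ i)) ≤ Real.exp (-(z⁻¹ * ρ (b ^ i))) := by
        apply Real.exp_le_exp.mpr
        have h2 := mul_le_mul_of_nonneg_right hinv hρn
        linarith
      exact hmono.trans (exp_neg_le_quad (by positivity))
    have hsumup := Finset.sum_le_sum hup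
    have hexpand : ∑ i ∈ Finset.Icc 1 n,
          b ^ ((i - 1) * d) * (1 - z⁻¹ * ρ (b ^ i) + (z⁻¹ * ρ (b ^ i)) ^ 2 / 2)
        = (∑ i ∈ Finset.Icc 1 n, b ^ ((i - 1) * d))
          - z⁻¹ * (∑ i ∈ Finset.Icc 1 n, b ^ ((i - 1) * d) * ρ (b ^ i))
          + z⁻¹ ^ 2 / 2 * (∑ i ∈ Finset.Icc 1 n, b ^ ((i - 1) * d) * ρ (b ^ i) ^ 2) := by
      rw [Finset.mul_sum, Finset.mul_sum, ← Finset.sum_sub_distrib, ← Finset.sum_add_distrib]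
      apply Finset.sum_congr rfl
      intro i _
      ring
    rw [hexpand] at hsumup
    -- first moment lower bound
    have hM1 : 2 * z ≤ (b ^ d - 1) * ∑ i ∈ Finset.Icc 1 n, b ^ ((i - 1) * d) * ρ (b ^ i) := by
      have hsingle : b ^ ((n - 1) * d) * ρ (b ^ n)
          ≤ ∑ i ∈ Finset.Icc 1 n, b ^ ((i - 1) * d) * ρ (b ^ i) := by
        apply Finset.single_le_sum (f := fun i => b ^ ((i - 1) * d) * ρ (b ^ i))
        · intro i hi
          exact mul_nonneg (pow_nonneg hb0.le _) (hρnn _ (by positivity))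
        · exact Finset.mem_Icc.mpr ⟨hn, le_refl n⟩
      have h1 := (hterm_lb n hn).trans hsingle
      have h2 := mul_le_mul_of_nonneg_left h1 (by linarith : (0:ℝ) ≤ b ^ d - 1)
      calc 2 * z = (b ^ d - 1) * (A1 * b ^ (-(d:ℝ)) * r ^ n) := by
            rw [hzdef, hεdef]; ring
        _ ≤ _ := h2
    -- second moment upper bound
    have hM2 : (b ^ d - 1) * ∑ i ∈ Finset.Icc 1 n, b ^ ((i - 1) * d) * ρ (b ^ i) ^ 2
        ≤ A2 ^ 2 * (b ^ d - 1) * (n : ℝ) * b ^ (max ((n:ℝ) * ((d:ℝ) - 2*α)) 0) := by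
      have hcard : (Finset.Icc 1 n).card = n := by
        rw [Nat.card_Icc]; omega
      have hsum : ∑ i ∈ Finset.Icc 1 n, b ^ ((i - 1) * d) * ρ (b ^ i) ^ 2
          ≤ (n : ℝ) * (A2 ^ 2 * b ^ (max ((n:ℝ) * ((d:ℝ) - 2*α)) 0)) := by
        have := Finset.sum_le_card_nsmul (Finset.Icc 1 n)
          (fun i => b ^ ((i - 1) * d) * ρ (b ^ i) ^ 2)
          (A2 ^ 2 * b ^ (max ((n:ℝ) * ((d:ℝ) - 2*α)) 0))
          (fun i hi => hterm_sq n i (Finset.mem_Icc.mp hi).1 (Finset.mem_Icc.mp hi).2)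
        rwa [hcard, nsmul_eq_mul] at this
      calc (b ^ d - 1) * ∑ i ∈ Finset.Icc 1 n, b ^ ((i - 1) * d) * ρ (b ^ i) ^ 2
          ≤ (b ^ d - 1) * ((n : ℝ) * (A2 ^ 2 * b ^ (max ((n:ℝ) * ((d:ℝ) - 2*α)) 0))) :=
            mul_le_mul_of_nonneg_left hsum (by linarith)
        _ = A2 ^ 2 * (b ^ d - 1) * (n : ℝ) * b ^ (max ((n:ℝ) * ((d:ℝ) - 2*α)) 0) := by ring
    -- the max-exponent is dominated
    have hPz : b ^ (max ((n:ℝ) * ((d:ℝ) - 2*α)) 0) ≤ r ^ n * r ^ n * s ^ n := by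
      rw [hrdef, hsdef, hpow, hpow, ← hradd, ← hradd]
      apply hrle
      have hδd : δ ≤ (d:ℝ) := min_le_left _ _
      have hδ2 : δ ≤ 2 * ((d:ℝ) - α) := min_le_right _ _
      have hn0 : (0:ℝ) ≤ (n:ℝ) := Nat.cast_nonneg n
      apply max_le
      · nlinarith
      · nlinarith
    -- combine everything
    have hzM2 : z⁻¹ ^ 2 / 2 *
        ((b ^ d - 1) * ∑ i ∈ Finset.Icc 1 n, b ^ ((i - 1) * d) * ρ (b ^ i) ^ 2) ≤ 1 / 2 := by
      have hrn : (0:ℝ) < r ^ n := pow_pos hr0 n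
      have hstep : z⁻¹ ^ 2 * b ^ (max ((n:ℝ) * ((d:ℝ) - 2*α)) 0) ≤ ε⁻¹ ^ 2 * s ^ n := by
        have hz2 : z⁻¹ ^ 2 = ε⁻¹ ^ 2 * (r ^ n)⁻¹ ^ 2 := by
          rw [hzdef, mul_inv]; ring
        rw [hz2]
        have := mul_le_mul_of_nonneg_left hPz
          (by positivity : (0:ℝ) ≤ (r ^ n)⁻¹ ^ 2)
        calc ε⁻¹ ^ 2 * (r ^ n)⁻¹ ^ 2 * b ^ (max ((n:ℝ) * ((d:ℝ) - 2*α)) 0)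
            = ε⁻¹ ^ 2 * ((r ^ n)⁻¹ ^ 2 * b ^ (max ((n:ℝ) * ((d:ℝ) - 2*α)) 0)) := by ring
          _ ≤ ε⁻¹ ^ 2 * ((r ^ n)⁻¹ ^ 2 * (r ^ n * r ^ n * s ^ n)) := by
              apply mul_le_mul_of_nonneg_left this (by positivity)
          _ = ε⁻¹ ^ 2 * s ^ n := by
              field_simp
      have hchain : z⁻¹ ^ 2 / 2 *
          ((b ^ d - 1) * ∑ i ∈ Finset.Icc 1 n, b ^ ((i - 1) * d) * ρ (b ^ i) ^ 2)
          ≤ A2 ^ 2 * (b ^ d - 1) / (2 * ε ^ 2) * ((n : ℝ) * s ^ n) := by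
        calc z⁻¹ ^ 2 / 2 *
            ((b ^ d - 1) * ∑ i ∈ Finset.Icc 1 n, b ^ ((i - 1) * d) * ρ (b ^ i) ^ 2)
            ≤ z⁻¹ ^ 2 / 2 *
              (A2 ^ 2 * (b ^ d - 1) * (n : ℝ) * b ^ (max ((n:ℝ) * ((d:ℝ) - 2*α)) 0)) := by
              apply mul_le_mul_of_nonneg_left hM2 (by positivity)
          _ = A2 ^ 2 * (b ^ d - 1) * (n : ℝ) / 2 *
              (z⁻¹ ^ 2 * b ^ (max ((n:ℝ) * ((d:ℝ) - 2*α)) 0)) := by ring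
          _ ≤ A2 ^ 2 * (b ^ d - 1) * (n : ℝ) / 2 * (ε⁻¹ ^ 2 * s ^ n) := by
              apply mul_le_mul_of_nonneg_left hstep
              have h1 : (0:ℝ) ≤ b ^ d - 1 := by linarith
              exact div_nonneg (mul_nonneg (mul_nonneg (sq_nonneg A2) h1)
                (Nat.cast_nonneg n)) (by norm_num)
          _ = A2 ^ 2 * (b ^ d - 1) / (2 * ε ^ 2) * ((n : ℝ) * s ^ n) := by
              field_simp
      exact hchain.trans (hn₁ n hnn₁)
    have hzM1 : 2 ≤ z⁻¹ * ((b ^ d - 1) * ∑ i ∈ Finset.Icc 1 n, b ^ ((i - 1) * d) * ρ (b ^ i)) := by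
      have := mul_le_mul_of_nonneg_left hM1 (by positivity : (0:ℝ) ≤ z⁻¹)
      rwa [show z⁻¹ * (2 * z) = 2 * (z⁻¹ * z) from by ring, inv_mul_cancel₀ hz0.ne',
        mul_one] at this
    -- multiply hsumup by (b^d - 1) and contradict
    have hfinal := mul_le_mul_of_nonneg_left hsumup (by linarith : (0:ℝ) ≤ b ^ d - 1)
    rw [heq] at hfinal
    rw [mul_add, mul_sub, hgeom n] at hfinal
    have e1 : (b ^ d - 1) * (z⁻¹ * ∑ i ∈ Finset.Icc 1 n, b ^ ((i - 1) * d) * ρ (b ^ i))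
        = z⁻¹ * ((b ^ d - 1) * ∑ i ∈ Finset.Icc 1 n, b ^ ((i - 1) * d) * ρ (b ^ i)) := by ring
    have e2 : (b ^ d - 1) * (z⁻¹ ^ 2 / 2 * ∑ i ∈ Finset.Icc 1 n, b ^ ((i - 1) * d) * ρ (b ^ i) ^ 2)
        = z⁻¹ ^ 2 / 2 * ((b ^ d - 1) * ∑ i ∈ Finset.Icc 1 n, b ^ ((i - 1) * d) * ρ (b ^ i) ^ 2) := by
      ring
    rw [e1, e2] at hfinal
    linarith
  -- the key identity
  have hident : ∀ n : ℕ, 1 ≤ n → (∀ i ∈ Finset.Icc 1 n, b ^ (-(n:ℝ)*θ) ≤ ρ (b ^ i)) →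
      1 - mjn d L θ ρ ζ n n
        = (Real.exp ((ζ n)⁻¹ * b ^ (-(n:ℝ)*θ)) - 1) * (b ^ (n*d) - 2) := by
    intro n hn hhyp
    have hζ0 := hζpos n hn
    have heq := hζeq n hn
    unfold zetaEq at heq
    have hpt : ∀ i ∈ Finset.Icc 1 n,
        b ^ ((i-1)*d) * pMinus L θ ρ ζ n (b ^ i)
          = b ^ ((i-1)*d)
            - Real.exp ((ζ n)⁻¹ * b ^ (-(n:ℝ)*θ))
              * (b ^ ((i-1)*d) * Real.exp (-(ζ n)⁻¹ * ρ (b ^ i))) := by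
      intro i hi
      have hmax : rhoMinus L θ ρ n (b ^ i) = ρ (b ^ i) - b ^ (-(n:ℝ)*θ) := by
        unfold rhoMinus
        exact max_eq_left (by have := hhyp i hi; linarith)
      unfold pMinus
      rw [hmax]
      rw [show -(ζ n)⁻¹ * (ρ (b ^ i) - b ^ (-(n:ℝ)*θ))
          = (-(ζ n)⁻¹ * ρ (b ^ i)) + ((ζ n)⁻¹ * b ^ (-(n:ℝ)*θ)) from by ring]
      rw [Real.exp_add]
      ring
    have hsum : ∑ i ∈ Finset.Icc 1 n, b ^ ((i-1)*d) * pMinus L θ ρ ζ n (b ^ i)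
        = (∑ i ∈ Finset.Icc 1 n, b ^ ((i-1)*d))
          - Real.exp ((ζ n)⁻¹ * b ^ (-(n:ℝ)*θ))
            * ∑ i ∈ Finset.Icc 1 n, b ^ ((i-1)*d) * Real.exp (-(ζ n)⁻¹ * ρ (b ^ i)) := by
      rw [Finset.sum_congr rfl hpt, Finset.sum_sub_distrib, ← Finset.mul_sum]
    have hm : mjn d L θ ρ ζ n n
        = (b ^ (n*d) - 1) - Real.exp ((ζ n)⁻¹ * b ^ (-(n:ℝ)*θ)) * (b ^ (n*d) - 2) := by
      unfold mjn
      rw [hsum, mul_sub, hgeom n]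
      rw [show (b ^ d - 1) * (Real.exp ((ζ n)⁻¹ * b ^ (-(n:ℝ)*θ))
            * ∑ i ∈ Finset.Icc 1 n, b ^ ((i-1)*d) * Real.exp (-(ζ n)⁻¹ * ρ (b ^ i)))
          = Real.exp ((ζ n)⁻¹ * b ^ (-(n:ℝ)*θ))
            * ((b ^ d - 1) * ∑ i ∈ Finset.Icc 1 n,
                b ^ ((i-1)*d) * Real.exp (-(ζ n)⁻¹ * ρ (b ^ i))) from by ring]
      rw [heq]
    rw [hm]
    ring
  -- eventual smallness conditions
  have hpowlt1 : ∀ β : ℝ, 0 < β → b ^ (-β) < 1 := fun β hβ =>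
    Real.rpow_lt_one_of_one_lt_of_neg hb1 (by linarith)
  have htendgen : ∀ (c β : ℝ), 0 < β →
      Tendsto (fun n : ℕ => c * (b ^ (-β)) ^ n) atTop (nhds 0) := by
    intro c β hβ
    have h := tendsto_pow_atTop_nhds_zero_of_lt_one (hrpos (-β)).le (hpowlt1 β hβ)
    simpa using h.const_mul c
  have hevA : ∀ᶠ n : ℕ in atTop, (b ^ (-(θ - α))) ^ n ≤ A1 := by
    have := (htendgen 1 (θ - α) (by linarith)).eventually (eventually_le_nhds hA1)
    simpa using this
  have hevX : ∀ᶠ n : ℕ in atTop, ε⁻¹ * (b ^ (-((d:ℝ) - α + θ))) ^ n ≤ 1 :=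
    (htendgen ε⁻¹ ((d:ℝ) - α + θ) (by linarith)).eventually
      (eventually_le_nhds one_pos)
  have hevC : ∀ᶠ n : ℕ in atTop, (ε⁻¹ + 4) * (b ^ (-(d:ℝ))) ^ n ≤ 1/2 :=
    (htendgen (ε⁻¹ + 4) (d:ℝ) (by linarith)).eventually
      (eventually_le_nhds (by norm_num))
  obtain ⟨n₂, hn₂⟩ := eventually_atTop.mp ((hevA.and hevX).and hevC)
  have hrninv : ∀ n : ℕ, (r ^ n)⁻¹ = b ^ (-(((d:ℝ) - α) * (n:ℝ))) := by
    intro n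
    rw [hrdef, hpow, ← hrneg]
  -- the main estimate
  have hmain1 : ∀ n : ℕ, max (max n₁ n₂) 1 ≤ n →
      |(1 - mjn d L θ ρ ζ n n) * ζ n * b ^ (-(n:ℝ) * ((d:ℝ) - θ)) - 1|
        ≤ (ε⁻¹ + 4) * b ^ (-(n:ℝ) * (d:ℝ)) := by
    intro n hn₀
    have hn : 1 ≤ n := le_trans (le_max_right _ _) hn₀
    have hnn₁ : n₁ ≤ n := le_trans ((le_max_left _ _).trans (le_max_left _ _)) hn₀
    have hnn₂ : n₂ ≤ n := le_trans ((le_max_right _ _).trans (le_max_left _ _)) hn₀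
    obtain ⟨⟨hcA, hcX⟩, _⟩ := hn₂ n hnn₂
    have hζ0 := hζpos n hn
    have hζlbn := hζlb n hnn₁ hn
    have hcond : ∀ i ∈ Finset.Icc 1 n, b ^ (-(n:ℝ)*θ) ≤ ρ (b ^ i) := by
      intro i hi
      obtain ⟨hi1, hin⟩ := Finset.mem_Icc.mp hi
      have h := hρlb _ (hbige i)
      have hA : b ^ (-(θ - α) * (n:ℝ)) ≤ A1 := by
        rw [← hpow]; exact hcA
      have hmono : b ^ ((n:ℝ) * (-α)) ≤ b ^ ((i:ℝ) * (-α)) := by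
        apply hrle
        have h1 : (i:ℝ) ≤ (n:ℝ) := Nat.cast_le.mpr hin
        nlinarith [hα0.le]
      calc b ^ (-(n:ℝ)*θ)
          = b ^ (-(θ - α) * (n:ℝ) + (n:ℝ) * (-α)) := by
            rw [show -(n:ℝ)*θ = -(θ - α) * (n:ℝ) + (n:ℝ) * (-α) from by ring]
        _ = b ^ (-(θ - α) * (n:ℝ)) * b ^ ((n:ℝ) * (-α)) := hradd _ _
        _ ≤ A1 * b ^ ((i:ℝ) * (-α)) := mul_le_mul hA hmono (hrpos _).le hA1.le
        _ = A1 * ((b:ℝ) ^ i) ^ (-α) := by rw [hbpow2 i]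
        _ ≤ ρ (b ^ i) := h
    have hid := hident n hn hcond
    set t : ℝ := b ^ (-(n:ℝ)*θ) with htdef
    set x : ℝ := (ζ n)⁻¹ * t with hxdef
    have ht0 : 0 < t := hrpos _
    have hx0 : 0 < x := mul_pos (inv_pos.mpr hζ0) ht0
    have hx3 : x ≤ ε⁻¹ * b ^ (-((d:ℝ) - α + θ) * (n:ℝ)) := by
      have hζinv : (ζ n)⁻¹ ≤ (ε * r ^ n)⁻¹ :=
        inv_anti₀ (mul_pos hε0 (pow_pos hr0 n)) hζlbn
      calc x ≤ (ε * r ^ n)⁻¹ * t := mul_le_mul_of_nonneg_right hζinv ht0.le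
        _ = ε⁻¹ * ((r ^ n)⁻¹ * t) := by rw [mul_inv]; ring
        _ = ε⁻¹ * b ^ (-((d:ℝ) - α + θ) * (n:ℝ)) := by
            rw [hrninv n, htdef, ← hradd]
            congr 2
            ring
    have hx1 : x ≤ 1 := by
      refine hx3.trans ?_
      rw [show -((d:ℝ) - α + θ) * (n:ℝ) = -((d:ℝ) - α + θ) * (n:ℕ) from rfl, ← hpow]
      exact hcX
    have hx2 : x ≤ ε⁻¹ * b ^ (-(n:ℝ) * (d:ℝ)) := by
      refine hx3.trans (mul_le_mul_of_nonneg_left (hrle ?_) (by positivity))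
      have hn0 : (0:ℝ) ≤ (n:ℝ) := Nat.cast_nonneg n
      nlinarith [hθα]
    -- exponential estimates
    have hxe : x + 1 ≤ Real.exp x := Real.add_one_le_exp x
    have hEb : Real.exp x - 1 ≤ x + 3/4 * x^2 := by
      have h := Real.exp_bound (x := x) (by rw [abs_of_pos hx0]; exact hx1)
        (n := 2) (by norm_num)
      have h2 : ∑ m ∈ Finset.range 2, x ^ m / m.factorial = 1 + x := by
        simp [Finset.sum_range_succ]
      rw [h2] at h
      have h3 := (abs_le.mp h).2
      have h4 : |x| ^ 2 = x ^ 2 := by rw [abs_of_pos hx0]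
      rw [h4] at h3
      norm_num [Nat.factorial] at h3
      linarith
    set u : ℝ := b ^ (-(n:ℝ) * (d:ℝ)) with hudef
    have hu0 : 0 < u := hrpos _
    have hbu : (b:ℝ) ^ (n*d) * u = 1 := by
      rw [hudef, hnpow (n*d), ← hradd,
        show ((n*d : ℕ):ℝ) + (-(n:ℝ)*(d:ℝ)) = 0 from by push_cast; ring,
        Real.rpow_zero]
    have hw : ζ n * b ^ (-(n:ℝ) * ((d:ℝ) - θ)) = x⁻¹ * u := by
      have hxinv : x⁻¹ = ζ n * t⁻¹ := by rw [hxdef, mul_inv, inv_inv]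
      have htinv : t⁻¹ = b ^ ((n:ℝ) * θ) := by
        rw [htdef, show -(n:ℝ)*θ = -((n:ℝ)*θ) from by ring, hrneg, inv_inv]
      rw [hxinv, htinv, hudef, mul_assoc, ← hradd]
      congr 2
      ring
    set v : ℝ := (Real.exp x - 1) * x⁻¹ with hvdef
    have hv1 : 1 ≤ v := by
      have h1 : x * x⁻¹ ≤ (Real.exp x - 1) * x⁻¹ :=
        mul_le_mul_of_nonneg_right (by linarith) (inv_nonneg.mpr hx0.le)
      rwa [mul_inv_cancel₀ hx0.ne'] at h1
    have hv2 : v ≤ 1 + x := by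
      have h1 : (Real.exp x - 1) * x⁻¹ ≤ (x + 3/4 * x^2) * x⁻¹ :=
        mul_le_mul_of_nonneg_right hEb (inv_nonneg.mpr hx0.le)
      have h2 : (x + 3/4 * x^2) * x⁻¹ = 1 + 3/4 * x := by field_simp
      rw [h2] at h1
      rw [hvdef]
      linarith
    have hT : (1 - mjn d L θ ρ ζ n n) * ζ n * b ^ (-(n:ℝ) * ((d:ℝ) - θ))
        = v * (1 - 2*u) := by
      calc (1 - mjn d L θ ρ ζ n n) * ζ n * b ^ (-(n:ℝ) * ((d:ℝ) - θ))
          = (1 - mjn d L θ ρ ζ n n) * (ζ n * b ^ (-(n:ℝ) * ((d:ℝ) - θ))) := by ring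
        _ = ((Real.exp x - 1) * (b ^ (n*d) - 2)) * (x⁻¹ * u) := by rw [hid, hw]
        _ = v * ((b:ℝ) ^ (n*d) * u - 2*u) := by rw [hvdef]; ring
        _ = v * (1 - 2*u) := by rw [hbu]
    rw [hT]
    have hvu : v - 1 ≤ ε⁻¹ * u := le_trans (by linarith) hx2
    have hv3 : v ≤ 2 := by linarith
    have h2uv : 2*u*v ≤ 4*u := by
      have h5 := mul_le_mul_of_nonneg_left hv3 (by linarith : (0:ℝ) ≤ 2*u)
      linarith
    have h2uv0 : 0 ≤ 2*u*v :=
      mul_nonneg (mul_nonneg (by norm_num) hu0.le) (by linarith)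
    have hεu : 0 ≤ ε⁻¹ * u := mul_nonneg (inv_nonneg.mpr hε0.le) hu0.le
    have hexp : v * (1 - 2*u) - 1 = (v - 1) - 2*u*v := by ring
    have hR : (ε⁻¹ + 4) * u = ε⁻¹ * u + 4*u := by ring
    rw [abs_le, hexp, hR]
    constructor
    · linarith
    · linarith
  refine ⟨ε⁻¹ + 4, by positivity, max (max n₁ n₂) 1, le_max_right _ _, hmain1, ?_⟩
  -- two-sided bound
  refine ⟨(1/2) * B⁻¹, (3/2) * ε⁻¹, by positivity, by positivity, ?_⟩
  intro n hn₀
  have hn : 1 ≤ n := le_trans (le_max_right _ _) hn₀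
  have hnn₁ : n₁ ≤ n := le_trans ((le_max_left _ _).trans (le_max_left _ _)) hn₀
  have hnn₂ : n₂ ≤ n := le_trans ((le_max_right _ _).trans (le_max_left _ _)) hn₀
  obtain ⟨_, hcC⟩ := hn₂ n hnn₂
  have hζ0 := hζpos n hn
  have hζlbn := hζlb n hnn₁ hn
  have hζubn := hζub n hn
  have hu0 : (0:ℝ) < b ^ (-(n:ℝ) * (d:ℝ)) := hrpos _
  have hueq : b ^ (-(n:ℝ) * (d:ℝ)) = (b ^ (-(d:ℝ)))^n := by
    rw [hpow]
    congr 1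
    ring
  have hTbound := hmain1 n hn₀
  have hT12 : 1/2 ≤ (1 - mjn d L θ ρ ζ n n) * ζ n * b ^ (-(n:ℝ) * ((d:ℝ) - θ)) ∧
      (1 - mjn d L θ ρ ζ n n) * ζ n * b ^ (-(n:ℝ) * ((d:ℝ) - θ)) ≤ 3/2 := by
    have h1 : (ε⁻¹ + 4) * b ^ (-(n:ℝ) * (d:ℝ)) ≤ 1/2 := by
      rw [hueq]; exact hcC
    obtain ⟨hl, hr⟩ := abs_le.mp hTbound
    constructor <;> linarith
  set T : ℝ := (1 - mjn d L θ ρ ζ n n) * ζ n * b ^ (-(n:ℝ) * ((d:ℝ) - θ)) with hTdef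
  set g : ℝ := (ζ n)⁻¹ * b ^ ((n:ℝ) * ((d:ℝ) - θ)) with hgdef
  have hg0 : 0 < g := mul_pos (inv_pos.mpr hζ0) (hrpos _)
  have hfact : 1 - mjn d L θ ρ ζ n n = T * g := by
    rw [hTdef, hgdef]
    have hww : b ^ (-(n:ℝ) * ((d:ℝ) - θ)) * b ^ ((n:ℝ) * ((d:ℝ) - θ)) = 1 := by
      rw [← hradd, show -(n:ℝ) * ((d:ℝ) - θ) + (n:ℝ) * ((d:ℝ) - θ) = 0 from by ring,
        Real.rpow_zero]
    rw [show (1 - mjn d L θ ρ ζ n n) * ζ n * b ^ (-(n:ℝ) * ((d:ℝ) - θ))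
          * ((ζ n)⁻¹ * b ^ ((n:ℝ) * ((d:ℝ) - θ)))
        = (1 - mjn d L θ ρ ζ n n) * (ζ n * (ζ n)⁻¹)
          * (b ^ (-(n:ℝ) * ((d:ℝ) - θ)) * b ^ ((n:ℝ) * ((d:ℝ) - θ))) from by ring,
      mul_inv_cancel₀ hζ0.ne', hww, mul_one, mul_one]
  have hpeq : (r ^ n)⁻¹ * b ^ ((n:ℝ) * ((d:ℝ) - θ)) = b ^ (-(n:ℝ) * (θ - α)) := by
    rw [hrninv n, ← hradd]
    congr 1
    ring
  have hg_ub : g ≤ ε⁻¹ * b ^ (-(n:ℝ) * (θ - α)) := by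
    have hζinv : (ζ n)⁻¹ ≤ (ε * r ^ n)⁻¹ :=
      inv_anti₀ (mul_pos hε0 (pow_pos hr0 n)) hζlbn
    calc g ≤ (ε * r ^ n)⁻¹ * b ^ ((n:ℝ) * ((d:ℝ) - θ)) :=
          mul_le_mul_of_nonneg_right hζinv (hrpos _).le
      _ = ε⁻¹ * ((r ^ n)⁻¹ * b ^ ((n:ℝ) * ((d:ℝ) - θ))) := by rw [mul_inv]; ring
      _ = ε⁻¹ * b ^ (-(n:ℝ) * (θ - α)) := by rw [hpeq]
  have hg_lb : B⁻¹ * b ^ (-(n:ℝ) * (θ - α)) ≤ g := by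
    have hζinv : (B * r ^ n)⁻¹ ≤ (ζ n)⁻¹ := inv_anti₀ hζ0 hζubn
    calc B⁻¹ * b ^ (-(n:ℝ) * (θ - α))
        = B⁻¹ * ((r ^ n)⁻¹ * b ^ ((n:ℝ) * ((d:ℝ) - θ))) := by rw [hpeq]
      _ = (B * r ^ n)⁻¹ * b ^ ((n:ℝ) * ((d:ℝ) - θ)) := by rw [mul_inv]; ring
      _ ≤ g := mul_le_mul_of_nonneg_right hζinv (hrpos _).le
  obtain ⟨hT1, hT2⟩ := hT12
  constructor
  · rw [hfact]
    have ha : (1/2) * g ≤ T * g := mul_le_mul_of_nonneg_right hT1 hg0.le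
    have hb2 : (1/2) * (B⁻¹ * b ^ (-(n:ℝ) * (θ - α))) ≤ (1/2) * g := by
      linarith [hg_lb]
    linarith
  · rw [hfact]
    have ha : T * g ≤ (3/2) * g := mul_le_mul_of_nonneg_right hT2 hg0.le
    have hb2 : (3/2) * g ≤ (3/2) * (ε⁻¹ * b ^ (-(n:ℝ) * (θ - α))) := by
      linarith [hg_ub]
    linarith


end
end

section
/- There exist a constant C > 0 and a threshold n₀ ≥ 1, both depending only on A_1, A_2, L, d, α and θ, such that m_j^{(n)} ≤ C·ζ_n^{−1}·L^{j(d−α)} for all n ≥ n₀ and all 1 ≤ j ≤ n − 1. -/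
open MeasureTheory ProbabilityTheory Filter Finset
open scoped ENNReal Classical

noncomputable section

lemma geom_aux_s2 (q : ℝ) (h0 : 0 ≤ q) (h1 : q < 1) (j : ℕ) :
    ∑ k ∈ Finset.range j, q ^ k ≤ (1 - q)⁻¹ := by
  rw [geom_sum_eq h1.ne]
  rw [div_le_iff_of_neg (by linarith : q - 1 < 0)]
  have h2 : (1 - q)⁻¹ * (q - 1) = -1 := by
    rw [inv_mul_eq_div, div_eq_iff (by linarith : (1:ℝ) - q ≠ 0)]; ring
  rw [h2]
  linarith [pow_nonneg h0 j]

lemma icc_geom_aux (q : ℝ) (j : ℕ) :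
    ∑ i ∈ Finset.Icc 1 j, q ^ (j - i) = ∑ k ∈ Finset.range j, q ^ k := by
  rw [← Finset.Ico_add_one_right_eq_Icc, Finset.sum_Ico_eq_sum_range]
  simp only [Nat.add_sub_cancel]
  rw [← Finset.sum_range_reflect]
  apply Finset.sum_congr rfl
  intro k hk
  rw [Finset.mem_range] at hk
  congr 1
  omega

lemma one_sub_exp_neg_le (t : ℝ) : 1 - Real.exp (-t) ≤ t := by
  linarith [Real.add_one_le_exp (-t)]

/-- `m_j^{(n)} ≤ C ζ_n^{-1} L^{j(d-α)}` for all `n ≥ n₀` and `1 ≤ j ≤ n-1`. -/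
theorem m_j_n_upper_bound
    (d L : ℕ) (hd : 1 ≤ d) (hL : 2 ≤ L)
    (A1 A2 α : ℝ) (hA1 : 0 < A1) (hA12 : A1 ≤ A2)
    (hα0 : 0 < α) (hαd : α < (d : ℝ))
    (ρ : ℝ → ℝ) (hρ0 : ρ 0 = 0)
    (hρnn : ∀ r : ℝ, 0 ≤ r → 0 ≤ ρ r)
    (hρlb : ∀ r : ℝ, 1 ≤ r → A1 * r ^ (-α) ≤ ρ r)
    (hρub : ∀ r : ℝ, 1 ≤ r → ρ r ≤ A2 * r ^ (-α))
    (θ : ℝ) (hα56 : α < 5 * (d : ℝ) / 6) (hθα : α < θ)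
    (hθ1 : α ≤ (d : ℝ) / 2 → θ < 4 * α / 3)
    (hθ2 : (d : ℝ) / 2 < α → α ≤ 2 * (d : ℝ) / 3 → θ < 2 * α - (d : ℝ) / 2)
    (hθ3 : 2 * (d : ℝ) / 3 < α → θ < 5 * α / 2 - (d : ℝ))
    (ζ : ℕ → ℝ) (hζpos : ∀ n : ℕ, 1 ≤ n → 0 < ζ n)
    (hζeq : ∀ n : ℕ, 1 ≤ n → zetaEq d L ρ n (ζ n))
 :
    ∃ C : ℝ, 0 < C ∧ ∃ n₀ : ℕ, 1 ≤ n₀ ∧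
      ∀ n : ℕ, n₀ ≤ n → ∀ j : ℕ, 1 ≤ j → j ≤ n - 1 →
        mjn d L θ ρ ζ n j ≤ C * (ζ n)⁻¹ * (L : ℝ) ^ ((j : ℝ) * ((d : ℝ) - α)) := by
  have hL1 : (1:ℝ) < (L:ℝ) := by exact_mod_cast Nat.lt_of_lt_of_le one_lt_two hL
  have hL0 : (0:ℝ) < (L:ℝ) := by linarith
  have hLd : (1:ℝ) < (L:ℝ) ^ d := one_lt_pow₀ hL1 (by omega)
  set q : ℝ := (L:ℝ) ^ (α - (d:ℝ)) with hq_def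
  have hq0 : 0 < q := Real.rpow_pos_of_pos hL0 _
  have hq1 : q < 1 := Real.rpow_lt_one_of_one_lt_of_neg hL1 (by linarith)
  refine ⟨((L:ℝ) ^ d - 1) * A2 * (L:ℝ) ^ (-(d:ℝ)) * (1 - q)⁻¹, ?_, 1, le_refl 1, ?_⟩
  · have hA2 : 0 < A2 := lt_of_lt_of_le hA1 hA12
    have h1 : (0:ℝ) < (L:ℝ) ^ (-(d:ℝ)) := Real.rpow_pos_of_pos hL0 _
    have h2 : (0:ℝ) < (1 - q)⁻¹ := inv_pos.mpr (by linarith)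
    have h3 : (0:ℝ) < (L:ℝ) ^ d - 1 := by linarith
    positivity
  · intro n hn j hj1 hjn
    have hζn : 0 < ζ n := hζpos n hn
    have hζinv : 0 ≤ (ζ n)⁻¹ := (inv_pos.mpr hζn).le
    have hA2 : 0 < A2 := lt_of_lt_of_le hA1 hA12
    set K : ℝ := (ζ n)⁻¹ * A2 * (L:ℝ) ^ (-(d:ℝ)) * (L:ℝ) ^ ((j:ℝ) * ((d:ℝ) - α)) with hK_def
    have hK0 : 0 ≤ K := by
      have h1 : (0:ℝ) < (L:ℝ) ^ (-(d:ℝ)) := Real.rpow_pos_of_pos hL0 _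
      have h2 : (0:ℝ) < (L:ℝ) ^ ((j:ℝ) * ((d:ℝ) - α)) := Real.rpow_pos_of_pos hL0 _
      positivity
    -- pointwise bound on the summands
    have hpt : ∀ i ∈ Finset.Icc 1 j,
        (L:ℝ) ^ ((i - 1) * d) * pMinus L θ ρ ζ n ((L:ℝ) ^ i) ≤ K * q ^ (j - i) := by
      intro i hi
      rw [Finset.mem_Icc] at hi
      obtain ⟨hi1, hij⟩ := hi
      have hLi1 : (1:ℝ) ≤ (L:ℝ) ^ i := one_le_pow₀ hL1.le
      have hLi0 : (0:ℝ) ≤ (L:ℝ) ^ i := by linarith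
      -- bound pMinus
      have hrm : rhoMinus L θ ρ n ((L:ℝ) ^ i) ≤ A2 * ((L:ℝ) ^ i) ^ (-α) := by
        unfold rhoMinus
        apply max_le
        · have hpos : (0:ℝ) < (L:ℝ) ^ (-(n:ℝ) * θ) := Real.rpow_pos_of_pos hL0 _
          have := hρub ((L:ℝ) ^ i) hLi1
          linarith
        · have h1 : (0:ℝ) ≤ ((L:ℝ) ^ i) ^ (-α) := Real.rpow_nonneg hLi0 _
          positivity
      have hpm : pMinus L θ ρ ζ n ((L:ℝ) ^ i)
          ≤ (ζ n)⁻¹ * (A2 * ((L:ℝ) ^ i) ^ (-α)) := by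
        unfold pMinus
        have h1 : 1 - Real.exp (-((ζ n)⁻¹ * rhoMinus L θ ρ n ((L:ℝ) ^ i)))
            ≤ (ζ n)⁻¹ * rhoMinus L θ ρ n ((L:ℝ) ^ i) :=
          one_sub_exp_neg_le _
        rw [neg_mul]
        exact h1.trans (mul_le_mul_of_nonneg_left hrm hζinv)
      have hbd : (L:ℝ) ^ ((i - 1) * d) * pMinus L θ ρ ζ n ((L:ℝ) ^ i)
          ≤ (L:ℝ) ^ ((i - 1) * d) * ((ζ n)⁻¹ * (A2 * ((L:ℝ) ^ i) ^ (-α))) :=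
        mul_le_mul_of_nonneg_left hpm (by positivity)
      refine hbd.trans (le_of_eq ?_)
      -- equality of the two expressions, via rpow arithmetic
      have e1 : (L:ℝ) ^ ((i - 1) * d) = (L:ℝ) ^ ((((i:ℝ) - 1) * d : ℝ)) := by
        rw [← Real.rpow_natCast (L:ℝ) ((i - 1) * d)]
        congr 1
        rw [Nat.cast_mul, Nat.cast_sub hi1, Nat.cast_one]
      have e2 : ((L:ℝ) ^ i) ^ (-α) = (L:ℝ) ^ ((i:ℝ) * (-α)) := by
        rw [← Real.rpow_natCast (L:ℝ) i, ← Real.rpow_mul hL0.le]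
      have e3 : q ^ (j - i) = (L:ℝ) ^ ((α - (d:ℝ)) * ((j:ℝ) - (i:ℝ))) := by
        rw [hq_def, ← Real.rpow_natCast ((L:ℝ) ^ (α - (d:ℝ))) (j - i),
          ← Real.rpow_mul hL0.le]
        congr 1
        rw [Nat.cast_sub hij]
      rw [hK_def, e1, e2, e3]
      rw [show (ζ n)⁻¹ * A2 * (L:ℝ) ^ (-(d:ℝ)) * (L:ℝ) ^ ((j:ℝ) * ((d:ℝ) - α)) *
            (L:ℝ) ^ ((α - (d:ℝ)) * ((j:ℝ) - (i:ℝ)))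
          = (ζ n)⁻¹ * A2 * ((L:ℝ) ^ (-(d:ℝ)) * (L:ℝ) ^ ((j:ℝ) * ((d:ℝ) - α)) *
            (L:ℝ) ^ ((α - (d:ℝ)) * ((j:ℝ) - (i:ℝ)))) by ring]
      rw [show (L:ℝ) ^ ((((i:ℝ) - 1) * d : ℝ)) * ((ζ n)⁻¹ * (A2 * (L:ℝ) ^ ((i:ℝ) * (-α))))
          = (ζ n)⁻¹ * A2 * ((L:ℝ) ^ ((((i:ℝ) - 1) * d : ℝ)) * (L:ℝ) ^ ((i:ℝ) * (-α))) by ring]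
      congr 1
      rw [← Real.rpow_add hL0, ← Real.rpow_add hL0, ← Real.rpow_add hL0]
      congr 1
      ring
    -- sum the bounds
    have hsum : ∑ i ∈ Finset.Icc 1 j, (L:ℝ) ^ ((i - 1) * d) * pMinus L θ ρ ζ n ((L:ℝ) ^ i)
        ≤ K * (1 - q)⁻¹ := by
      calc ∑ i ∈ Finset.Icc 1 j, (L:ℝ) ^ ((i - 1) * d) * pMinus L θ ρ ζ n ((L:ℝ) ^ i)
          ≤ ∑ i ∈ Finset.Icc 1 j, K * q ^ (j - i) := Finset.sum_le_sum hpt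
        _ = K * ∑ i ∈ Finset.Icc 1 j, q ^ (j - i) := by rw [Finset.mul_sum]
        _ = K * ∑ k ∈ Finset.range j, q ^ k := by rw [icc_geom_aux]
        _ ≤ K * (1 - q)⁻¹ :=
            mul_le_mul_of_nonneg_left (geom_aux_s2 q hq0.le hq1 j) hK0
    unfold mjn
    calc ((L:ℝ) ^ d - 1) *
          ∑ i ∈ Finset.Icc 1 j, (L:ℝ) ^ ((i - 1) * d) * pMinus L θ ρ ζ n ((L:ℝ) ^ i)
        ≤ ((L:ℝ) ^ d - 1) * (K * (1 - q)⁻¹) :=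
          mul_le_mul_of_nonneg_left hsum (by linarith)
      _ = ((L:ℝ) ^ d - 1) * A2 * (L:ℝ) ^ (-(d:ℝ)) * (1 - q)⁻¹ * (ζ n)⁻¹ *
            (L:ℝ) ^ ((j:ℝ) * ((d:ℝ) - α)) := by rw [hK_def]; ring

end
end

section
/- There exist a threshold n₀ ≥ 2 and a constant δ ∈ (0,1), both depending only on A_1, A_2, L, d, α and θ, such that m_j^{(n)} ≤ 1 − δ for all n ≥ n₀ and all 1 ≤ j ≤ n − 1. -/
open MeasureTheory ProbabilityTheory Filter Finset
open scoped ENNReal Classical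

noncomputable section

lemma half_le_one_sub_exp_neg {y : ℝ} (h0 : 0 ≤ y) (h1 : y ≤ 1) :
    y / 2 ≤ 1 - Real.exp (-y) := by
  have h := Real.add_one_le_exp y
  have hy : (0:ℝ) < Real.exp (-y) := Real.exp_pos _
  have hm : Real.exp (-y) * Real.exp y = 1 := by rw [← Real.exp_add]; simp
  nlinarith [mul_nonneg h0 h0]

set_option maxHeartbeats 1000000 in
/-- There exist `n₀ ≥ 2` and `δ ∈ (0,1)` with `m_j^{(n)} ≤ 1 - δ` for all
`n ≥ n₀` and `1 ≤ j ≤ n - 1`. -/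
theorem m_j_n_bounded_away_from_one
    (d L : ℕ) (hd : 1 ≤ d) (hL : 2 ≤ L)
    (A1 A2 α : ℝ) (hA1 : 0 < A1) (hA12 : A1 ≤ A2)
    (hα0 : 0 < α) (hαd : α < (d : ℝ))
    (ρ : ℝ → ℝ) (hρ0 : ρ 0 = 0)
    (hρnn : ∀ r : ℝ, 0 ≤ r → 0 ≤ ρ r)
    (hρlb : ∀ r : ℝ, 1 ≤ r → A1 * r ^ (-α) ≤ ρ r)
    (hρub : ∀ r : ℝ, 1 ≤ r → ρ r ≤ A2 * r ^ (-α))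
    (θ : ℝ) (hα56 : α < 5 * (d : ℝ) / 6) (hθα : α < θ)
    (hθ1 : α ≤ (d : ℝ) / 2 → θ < 4 * α / 3)
    (hθ2 : (d : ℝ) / 2 < α → α ≤ 2 * (d : ℝ) / 3 → θ < 2 * α - (d : ℝ) / 2)
    (hθ3 : 2 * (d : ℝ) / 3 < α → θ < 5 * α / 2 - (d : ℝ))
    (ζ : ℕ → ℝ) (hζpos : ∀ n : ℕ, 1 ≤ n → 0 < ζ n)
    (hζeq : ∀ n : ℕ, 1 ≤ n → zetaEq d L ρ n (ζ n))
 :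
    ∃ n₀ : ℕ, 2 ≤ n₀ ∧ ∃ δ : ℝ, 0 < δ ∧ δ < 1 ∧
      ∀ n : ℕ, n₀ ≤ n → ∀ j : ℕ, 1 ≤ j → j ≤ n - 1 →
        mjn d L θ ρ ζ n j ≤ 1 - δ := by
  have hL0 : (0:ℝ) < L := by positivity
  have hL2 : (2:ℝ) ≤ (L:ℝ) := by exact_mod_cast hL
  have hL1 : (1:ℝ) < (L:ℝ) := by linarith
  have hA2 : 0 < A2 := lt_of_lt_of_le hA1 hA12
  set q : ℝ := (L:ℝ) ^ ((d:ℝ) - α) with hqdef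
  have hq1 : 1 < q :=
    (Real.one_lt_rpow_iff_of_pos hL0).mpr (Or.inl ⟨hL1, by linarith⟩)
  have hq0 : 0 < q := by linarith
  have hLd2 : (2:ℝ) ≤ (L:ℝ)^d := by
    calc (2:ℝ) ≤ (L:ℝ) := hL2
    _ = (L:ℝ)^1 := (pow_one _).symm
    _ ≤ (L:ℝ)^d := pow_le_pow_right₀ (by linarith) hd
  set D : ℝ := (L:ℝ)^d - 1 with hDdef
  have hD1 : (1:ℝ) ≤ D := by simp only [hDdef]; linarith
  have hD0 : (0:ℝ) < D := by linarith
  have hLα : (0:ℝ) < (L:ℝ) ^ α := Real.rpow_pos_of_pos hL0 α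
  set δ1 : ℝ := A1 * (q - 1) * (L:ℝ) ^ α / (2 * A2 * (L:ℝ)^d) with hδ1def
  have hδ1 : 0 < δ1 := by
    apply div_pos
    · exact mul_pos (mul_pos hA1 (by linarith)) hLα
    · positivity
  refine ⟨2, le_refl 2, min δ1 (1/2), lt_min hδ1 (by norm_num),
    lt_of_le_of_lt (min_le_right _ _) (by norm_num), ?_⟩
  intro n hn j hj1 hj2
  have hn1 : 1 ≤ n := by omega
  have hjn : j < n := by omega
  have hζn : 0 < ζ n := hζpos n hn1
  have hζi : 0 < (ζ n)⁻¹ := inv_pos.mpr hζn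
  -- abbreviations
  set f : ℕ → ℝ := fun i => (L:ℝ)^((i-1)*d) * (1 - Real.exp (-(ζ n)⁻¹ * ρ ((L:ℝ)^i)))
    with hfdef
  have hLpow1 : ∀ i : ℕ, (1:ℝ) ≤ (L:ℝ)^i := fun i => one_le_pow₀ (by linarith)
  have hρi : ∀ i : ℕ, 0 ≤ ρ ((L:ℝ)^i) := fun i => hρnn _ (by positivity)
  have hf0 : ∀ i : ℕ, 0 ≤ f i := by
    intro i
    apply mul_nonneg (by positivity)
    have : Real.exp (-(ζ n)⁻¹ * ρ ((L:ℝ)^i)) ≤ 1 :=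
      Real.exp_le_one_iff.mpr (by rw [neg_mul]; exact neg_nonpos.mpr (mul_nonneg hζi.le (hρi i)))
    linarith
  -- geometric identity
  have hgeo : ∀ m : ℕ, D * ∑ i ∈ Finset.Icc 1 m, (L:ℝ)^((i-1)*d) = (L:ℝ)^(m*d) - 1 := by
    intro m
    have h1 : ∑ i ∈ Finset.Icc 1 m, (L:ℝ)^((i-1)*d)
        = ∑ k ∈ Finset.range m, ((L:ℝ)^d)^k := by
      rw [← Finset.Ico_add_one_right_eq_Icc, Finset.sum_Ico_eq_sum_range]
      simp [← pow_mul, Nat.mul_comm]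
    rw [h1, geom_sum_eq (by linarith : (L:ℝ)^d ≠ 1), hDdef, mul_comm,
      div_mul_cancel₀ _ (by linarith : (L:ℝ)^d - 1 ≠ 0), ← pow_mul, Nat.mul_comm]
  -- key identity : D * ∑ f = 1
  have hz := hζeq n hn1
  unfold zetaEq at hz
  have hkey : D * ∑ i ∈ Finset.Icc 1 n, f i = 1 := by
    have hsplit : ∑ i ∈ Finset.Icc 1 n, f i
        = (∑ i ∈ Finset.Icc 1 n, (L:ℝ)^((i-1)*d))
          - ∑ i ∈ Finset.Icc 1 n, (L:ℝ)^((i-1)*d) * Real.exp (-(ζ n)⁻¹ * ρ ((L:ℝ)^i)) := by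
      rw [← Finset.sum_sub_distrib]
      exact Finset.sum_congr rfl (fun i _ => by simp [hfdef]; ring)
    rw [hsplit, mul_sub, hgeo n, hDdef, hz]
    ring
  -- pMinus ≤ 1 - exp(...)
  have hpm : ∀ i : ℕ, pMinus L θ ρ ζ n ((L:ℝ)^i)
      ≤ 1 - Real.exp (-(ζ n)⁻¹ * ρ ((L:ℝ)^i)) := by
    intro i
    unfold pMinus rhoMinus
    have hmax : max (ρ ((L:ℝ)^i) - (L:ℝ)^(-(n:ℝ) * θ)) 0 ≤ ρ ((L:ℝ)^i) := by
      apply max_le _ (hρi i)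
      have : (0:ℝ) ≤ (L:ℝ)^(-(n:ℝ) * θ) := Real.rpow_nonneg (by linarith) _
      linarith
    have := Real.exp_le_exp.mpr
      (mul_le_mul_of_nonpos_left hmax (neg_nonpos.mpr hζi.le))
    linarith
  -- mjn ≤ 1 - D * f n
  have hsub : ∑ i ∈ Finset.Icc 1 j, f i + f n ≤ ∑ i ∈ Finset.Icc 1 n, f i := by
    have hnot : n ∉ Finset.Icc 1 j := by
      simp only [Finset.mem_Icc]; omega
    rw [add_comm, ← Finset.sum_insert hnot]
    apply Finset.sum_le_sum_of_subset_of_nonneg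
    · intro x hx
      simp only [Finset.mem_insert, Finset.mem_Icc] at hx ⊢
      omega
    · intro i _ _; exact hf0 i
  have hmj : mjn d L θ ρ ζ n j ≤ 1 - D * f n := by
    unfold mjn
    have h1 : ∑ i ∈ Finset.Icc 1 j, (L:ℝ)^((i-1)*d) * pMinus L θ ρ ζ n ((L:ℝ)^i)
        ≤ ∑ i ∈ Finset.Icc 1 j, f i := by
      apply Finset.sum_le_sum
      intro i _
      exact mul_le_mul_of_nonneg_left (hpm i) (by positivity)
    have h2 : D * ∑ i ∈ Finset.Icc 1 j, f i ≤ 1 - D * f n := by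
      have h := mul_le_mul_of_nonneg_left hsub hD0.le
      rw [mul_add] at h
      linarith only [h, hkey]
    calc D * ∑ i ∈ Finset.Icc 1 j, (L:ℝ)^((i-1)*d) * pMinus L θ ρ ζ n ((L:ℝ)^i)
        ≤ D * ∑ i ∈ Finset.Icc 1 j, f i := mul_le_mul_of_nonneg_left h1 hD0.le
      _ ≤ 1 - D * f n := h2
  -- upper bound on each f i
  have hterm : ∀ i ∈ Finset.Icc 1 n, f i
      ≤ (ζ n)⁻¹ * A2 * (L:ℝ)^(-α) * q^(i-1) := by
    intro i hi
    simp only [Finset.mem_Icc] at hi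
    have h1 : 1 - Real.exp (-(ζ n)⁻¹ * ρ ((L:ℝ)^i)) ≤ (ζ n)⁻¹ * ρ ((L:ℝ)^i) := by
      linarith only [Real.add_one_le_exp (-(ζ n)⁻¹ * ρ ((L:ℝ)^i))]
    have h2 : ρ ((L:ℝ)^i) ≤ A2 * ((L:ℝ)^i) ^ (-α) := hρub _ (hLpow1 i)
    have h3 : (L:ℝ)^((i-1)*d) * (((L:ℝ)^i) ^ (-α)) = (L:ℝ)^(-α) * q^(i-1) := by
      rw [hqdef, ← Real.rpow_natCast (L:ℝ) ((i-1)*d), ← Real.rpow_natCast (L:ℝ) i,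
        ← Real.rpow_natCast ((L:ℝ) ^ ((d:ℝ) - α)) (i-1),
        ← Real.rpow_mul hL0.le, ← Real.rpow_mul hL0.le,
        ← Real.rpow_add hL0, ← Real.rpow_add hL0]
      congr 1
      have hcast : ((i - 1 : ℕ) : ℝ) = (i:ℝ) - 1 := by
        push_cast [Nat.cast_sub hi.1]; ring
      push_cast [hcast]
      ring
    have hpow0 : (0:ℝ) ≤ (L:ℝ)^((i-1)*d) := by positivity
    calc f i ≤ (L:ℝ)^((i-1)*d) * ((ζ n)⁻¹ * ρ ((L:ℝ)^i)) :=
          mul_le_mul_of_nonneg_left h1 hpow0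
      _ ≤ (L:ℝ)^((i-1)*d) * ((ζ n)⁻¹ * (A2 * ((L:ℝ)^i) ^ (-α))) := by
          apply mul_le_mul_of_nonneg_left _ hpow0
          exact mul_le_mul_of_nonneg_left h2 hζi.le
      _ = (ζ n)⁻¹ * A2 * ((L:ℝ)^((i-1)*d) * (((L:ℝ)^i) ^ (-α))) := by ring
      _ = (ζ n)⁻¹ * A2 * (L:ℝ)^(-α) * q^(i-1) := by rw [h3]; ring
  -- sum the geometric bound
  have hsum2 : ∑ i ∈ Finset.Icc 1 n, f i
      ≤ (ζ n)⁻¹ * A2 * (L:ℝ)^(-α) * (q^n / (q-1)) := by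
    calc ∑ i ∈ Finset.Icc 1 n, f i
        ≤ ∑ i ∈ Finset.Icc 1 n, (ζ n)⁻¹ * A2 * (L:ℝ)^(-α) * q^(i-1) :=
          Finset.sum_le_sum hterm
      _ = (ζ n)⁻¹ * A2 * (L:ℝ)^(-α) * ∑ i ∈ Finset.Icc 1 n, q^(i-1) := by
          rw [Finset.mul_sum]
      _ = (ζ n)⁻¹ * A2 * (L:ℝ)^(-α) * ∑ k ∈ Finset.range n, q^k := by
          congr 1
          rw [← Finset.Ico_add_one_right_eq_Icc, Finset.sum_Ico_eq_sum_range]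
          simp
      _ = (ζ n)⁻¹ * A2 * (L:ℝ)^(-α) * ((q^n - 1) / (q-1)) := by
          rw [geom_sum_eq (ne_of_gt hq1)]
      _ ≤ (ζ n)⁻¹ * A2 * (L:ℝ)^(-α) * (q^n / (q-1)) := by
          apply mul_le_mul_of_nonneg_left _
            (mul_nonneg (mul_nonneg hζi.le hA2.le) (Real.rpow_nonneg hL0.le _))
          exact (div_le_div_iff_of_pos_right (by linarith)).mpr (by linarith [pow_pos hq0 n])
  -- upper bound on zeta
  set Lma : ℝ := (L:ℝ)^(-α) with hLmadef
  have hLma : Lma = ((L:ℝ)^α)⁻¹ := Real.rpow_neg hL0.le α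
  have hLma0 : 0 < Lma := Real.rpow_pos_of_pos hL0 _
  set P : ℝ := ((L:ℝ)^n : ℝ) ^ (-α) with hPdef
  have hP0 : 0 < P := Real.rpow_pos_of_pos (by positivity) _
  set Q : ℝ := q^n with hQdef
  have hQ0 : 0 < Q := pow_pos hq0 n
  have hLnd0 : (0:ℝ) < (L:ℝ)^(n*d) := by positivity
  have h1b : 1 ≤ D * ((ζ n)⁻¹ * A2 * Lma * (Q / (q-1))) := by
    calc (1:ℝ) = D * ∑ i ∈ Finset.Icc 1 n, f i := hkey.symm
    _ ≤ _ := mul_le_mul_of_nonneg_left hsum2 hD0.le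
  have h1b2 : q - 1 ≤ (ζ n)⁻¹ * (D * A2 * Lma * Q) := by
    have h := mul_le_mul_of_nonneg_right h1b (by linarith : (0:ℝ) ≤ q - 1)
    calc q - 1 = 1 * (q-1) := by ring
    _ ≤ D * ((ζ n)⁻¹ * A2 * Lma * (Q/(q-1))) * (q-1) := h
    _ = (ζ n)⁻¹ * (D * A2 * Lma * Q) / (q-1) * (q-1) := by ring
    _ = (ζ n)⁻¹ * (D * A2 * Lma * Q) :=
        div_mul_cancel₀ _ (by linarith : q - 1 ≠ 0)
  have hqn : Q = (L:ℝ)^(n*d) * P := by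
    rw [hQdef, hqdef, hPdef, ← Real.rpow_natCast ((L:ℝ) ^ ((d:ℝ) - α)) n,
      ← Real.rpow_natCast (L:ℝ) (n*d), ← Real.rpow_natCast (L:ℝ) n,
      ← Real.rpow_mul hL0.le, ← Real.rpow_mul hL0.le, ← Real.rpow_add hL0]
    congr 1
    push_cast
    ring
  set X : ℝ := (ζ n)⁻¹ * ρ ((L:ℝ)^n) with hXdef
  have hX0 : 0 ≤ X := mul_nonneg hζi.le (hρi n)
  have hρn : A1 * P ≤ ρ ((L:ℝ)^n) := hρlb _ (hLpow1 n)
  set β : ℝ := A1 * (q - 1) * (L:ℝ)^α / (A2 * D) with hβdef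
  have hβ0 : 0 < β := div_pos (mul_pos (mul_pos hA1 (by linarith)) hLα) (by positivity)
  have hXlb : β / (L:ℝ)^(n*d) ≤ X := by
    have hz2 : (q-1) / (D * A2 * Lma * Q) ≤ (ζ n)⁻¹ := by
      rw [div_le_iff₀ (by positivity)]
      calc q - 1 ≤ (ζ n)⁻¹ * (D * A2 * Lma * Q) := h1b2
      _ = (ζ n)⁻¹ * (D * A2 * Lma * Q) := rfl
    have hstep : (q-1)/(D * A2 * Lma * Q) * (A1 * P) ≤ (ζ n)⁻¹ * (A1 * P) :=
      mul_le_mul_of_nonneg_right hz2 (by positivity)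
    have hstep2 : (ζ n)⁻¹ * (A1 * P) ≤ X := by
      rw [hXdef]
      exact mul_le_mul_of_nonneg_left hρn hζi.le
    have heq : (q-1)/(D * A2 * Lma * Q) * (A1 * P) = β / (L:ℝ)^(n*d) := by
      rw [hβdef, hLma, hqn]
      field_simp
    linarith [heq ▸ hstep]
  -- final lower bound on D * f n
  have harg : -(ζ n)⁻¹ * ρ ((L:ℝ)^n) = -X := by rw [hXdef]; ring
  have hfn : f n = (L:ℝ)^((n-1)*d) * (1 - Real.exp (-X)) := by
    simp only [hfdef, harg]
  have hpw : (L:ℝ)^((n-1)*d) * (L:ℝ)^d = (L:ℝ)^(n*d) := by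
    have h : (n - 1) + 1 = n := by omega
    rw [← pow_add]
    congr 1
    conv_rhs => rw [← h]
    rw [Nat.succ_mul]
  have hLn1d : (1:ℝ) ≤ (L:ℝ)^((n-1)*d) := one_le_pow₀ (by linarith)
  have hfinal : min δ1 (1/2) ≤ D * f n := by
    rcases le_total X 1 with hXle | hXge
    · -- X ≤ 1
      have hexp : X / 2 ≤ 1 - Real.exp (-X) := half_le_one_sub_exp_neg hX0 hXle
      have heq2 : D * ((L:ℝ)^((n-1)*d) * (β / (L:ℝ)^(n*d) / 2)) = δ1 := by
        rw [hβdef, hδ1def, ← hpw]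
        field_simp
      have hch : D * ((L:ℝ)^((n-1)*d) * (β / (L:ℝ)^(n*d) / 2)) ≤ D * f n := by
        rw [hfn]
        apply mul_le_mul_of_nonneg_left _ hD0.le
        apply mul_le_mul_of_nonneg_left _ (by positivity)
        calc β / (L:ℝ)^(n*d) / 2 ≤ X / 2 := by linarith
        _ ≤ 1 - Real.exp (-X) := hexp
      calc min δ1 (1/2) ≤ δ1 := min_le_left _ _
      _ = D * ((L:ℝ)^((n-1)*d) * (β / (L:ℝ)^(n*d) / 2)) := heq2.symm
      _ ≤ D * f n := hch
    · -- X ≥ 1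
      have hexp : (1:ℝ) / 2 ≤ 1 - Real.exp (-X) := by
        have h1 : Real.exp (-X) ≤ Real.exp (-1) := Real.exp_le_exp.mpr (by linarith)
        have h2 : (1:ℝ)/2 ≤ 1 - Real.exp (-1) := by
          have := half_le_one_sub_exp_neg (zero_le_one) (le_refl (1:ℝ))
          linarith only [this]
        linarith
      have : (1:ℝ)/2 ≤ D * f n := by
        rw [hfn]
        calc (1:ℝ)/2 = 1 * (1 * (1/2)) := by ring
        _ ≤ D * ((L:ℝ)^((n-1)*d) * (1 - Real.exp (-X))) := by
            apply mul_le_mul hD1 _ (by positivity) (by linarith)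
            apply mul_le_mul hLn1d (by linarith) (by norm_num) (by positivity)
      calc min δ1 (1/2) ≤ 1/2 := min_le_right _ _
      _ ≤ D * f n := this
  exact hmj.trans (sub_le_sub_left hfinal 1)

end
end

section
/- For all n ≥ 1 the exponential moment satisfies E[exp(W_1^{(n)})] ≤ e², and consequently E[(W_1^{(n)})^k] ≤ k!·e² for all integers k ≥ 1. -/
open MeasureTheory ProbabilityTheory Filter Finset
open scoped ENNReal Classical

noncomputable section

lemma aux_lintegral_prod {Ω : Type} [MeasurableSpace Ω] {P : Measure Ω}
    [IsProbabilityMeasure P] {g : ℕ → Ω → ℝ≥0∞} (hmeas : ∀ i, Measurable (g i))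
    (hind : iIndepFun g P) (s : Finset ℕ) :
    ∫⁻ ω, ∏ i ∈ s, g i ω ∂P = ∏ i ∈ s, ∫⁻ ω, g i ω ∂P := by
  classical
  induction s using Finset.induction_on with
  | empty => simp
  | @insert a s ha ih =>
    have hprodm : Measurable (∏ j ∈ s, g j) := by
      rw [show (∏ j ∈ s, g j) = fun ω => ∏ j ∈ s, g j ω from funext fun ω => by
        simp [Finset.prod_apply]]
      exact Finset.measurable_prod _ fun j _ => hmeas j
    have hindep : IndepFun (g a) (∏ j ∈ s, g j) P :=
      (hind.indepFun_finsetProd_of_notMem hmeas ha).symm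
    have key := lintegral_mul_eq_lintegral_mul_lintegral_of_indepFun
      (hmeas a) hprodm hindep
    calc ∫⁻ ω, ∏ i ∈ insert a s, g i ω ∂P
        = ∫⁻ ω, (g a * ∏ j ∈ s, g j) ω ∂P := by
          apply lintegral_congr; intro ω
          simp [Finset.prod_insert ha, Finset.prod_apply]
      _ = (∫⁻ ω, g a ω ∂P) * ∫⁻ ω, (∏ j ∈ s, g j) ω ∂P := key
      _ = (∫⁻ ω, g a ω ∂P) * ∏ i ∈ s, ∫⁻ ω, g i ω ∂P := by
          rw [← ih]; congr 1; apply lintegral_congr; intro ω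
          simp [Finset.prod_apply]
      _ = ∏ i ∈ insert a s, ∫⁻ ω, g i ω ∂P := by
          rw [Finset.prod_insert ha]

lemma aux_binom_mgf {Ω : Type} [MeasurableSpace Ω] (P : Measure Ω)
    (N : ℕ) (p : ℝ) (hp0 : 0 ≤ p) (hp1 : p ≤ 1) (X : Ω → ℕ) (hX : Measurable X)
    (hdist : ∀ k : ℕ, P {ω | X ω = k} =
      ENNReal.ofReal ((N.choose k : ℝ) * p ^ k * (1 - p) ^ (N - k))) :
    ∫⁻ ω, ENNReal.ofReal (Real.exp (X ω)) ∂P =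
      ENNReal.ofReal ((Real.exp 1 * p + (1 - p)) ^ N) := by
  have hf : Measurable (fun k : ℕ => ENNReal.ofReal (Real.exp k)) := measurable_from_nat
  have hmapP : ∀ k : ℕ, (P.map X) {k} =
      ENNReal.ofReal ((N.choose k : ℝ) * p ^ k * (1 - p) ^ (N - k)) := by
    intro k
    rw [Measure.map_apply hX (measurableSet_singleton k)]
    exact hdist k
  calc ∫⁻ ω, ENNReal.ofReal (Real.exp (X ω)) ∂P
      = ∫⁻ k, ENNReal.ofReal (Real.exp k) ∂(P.map X) := (lintegral_map hf hX).symm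
    _ = ∑' k : ℕ, ENNReal.ofReal (Real.exp k) * (P.map X) {k} := lintegral_countable' _
    _ = ∑' k : ℕ, ENNReal.ofReal
          (Real.exp k * ((N.choose k : ℝ) * p ^ k * (1 - p) ^ (N - k))) := by
        refine tsum_congr fun k => ?_
        rw [hmapP k, ← ENNReal.ofReal_mul (Real.exp_nonneg _)]
    _ = ∑ k ∈ Finset.range (N + 1), ENNReal.ofReal
          (Real.exp k * ((N.choose k : ℝ) * p ^ k * (1 - p) ^ (N - k))) := by
        refine tsum_eq_sum fun k hk => ?_
        have hk' : N < k := by simpa using Finset.mem_range.not.mp hk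
        simp [Nat.choose_eq_zero_of_lt hk']
    _ = ENNReal.ofReal (∑ k ∈ Finset.range (N + 1),
          Real.exp k * ((N.choose k : ℝ) * p ^ k * (1 - p) ^ (N - k))) := by
        rw [ENNReal.ofReal_sum_of_nonneg]
        intro k _
        have h1p : (0:ℝ) ≤ 1 - p := by linarith
        positivity
    _ = ENNReal.ofReal ((Real.exp 1 * p + (1 - p)) ^ N) := by
        congr 1
        rw [add_pow]
        refine Finset.sum_congr rfl fun k _ => ?_
        have hek : Real.exp (k : ℝ) = Real.exp 1 ^ k := by
          rw [← Real.exp_nat_mul, mul_one]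
        rw [hek, mul_pow]
        ring

lemma aux_tel (L d : ℕ) (n : ℕ) :
    ∑ i ∈ Finset.Icc 1 n, ((L:ℝ) ^ d - 1) * (L:ℝ) ^ ((i - 1) * d)
      = (L:ℝ) ^ (n * d) - 1 := by
  induction n with
  | zero => simp
  | succ n ih =>
    rw [Finset.sum_Icc_succ_top (by omega), ih]
    have h1 : n + 1 - 1 = n := by omega
    have h2 : (n + 1) * d = n * d + d := by ring
    rw [h1, h2, pow_add]; ring


/-- `E[exp(W₁^{(n)})] ≤ e²` for all `n ≥ 1`, and consequently
`E[(W₁^{(n)})^k] ≤ k! e²` for all `k ≥ 1`. -/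
theorem exp_moment_W_one_le
    (d L : ℕ) (hd : 1 ≤ d) (hL : 2 ≤ L)
    (A1 A2 α : ℝ) (hA1 : 0 < A1) (hA12 : A1 ≤ A2)
    (hα0 : 0 < α) (hαd : α < (d : ℝ))
    (ρ : ℝ → ℝ) (hρ0 : ρ 0 = 0)
    (hρnn : ∀ r : ℝ, 0 ≤ r → 0 ≤ ρ r)
    (hρlb : ∀ r : ℝ, 1 ≤ r → A1 * r ^ (-α) ≤ ρ r)
    (hρub : ∀ r : ℝ, 1 ≤ r → ρ r ≤ A2 * r ^ (-α))
    (θ : ℝ) (hα56 : α < 5 * (d : ℝ) / 6) (hθα : α < θ)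
    (hθ1 : α ≤ (d : ℝ) / 2 → θ < 4 * α / 3)
    (hθ2 : (d : ℝ) / 2 < α → α ≤ 2 * (d : ℝ) / 3 → θ < 2 * α - (d : ℝ) / 2)
    (hθ3 : 2 * (d : ℝ) / 3 < α → θ < 5 * α / 2 - (d : ℝ))
    (ζ : ℕ → ℝ) (hζpos : ∀ n : ℕ, 1 ≤ n → 0 < ζ n)
    (hζeq : ∀ n : ℕ, 1 ≤ n → zetaEq d L ρ n (ζ n))
    {Ω : Type} [MeasurableSpace Ω] (P : Measure Ω) [IsProbabilityMeasure P]
    (X : ℕ → ℕ → Ω → ℕ)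
    (hXmeas : ∀ n i, Measurable (X n i))
    (hXindep : ∀ n : ℕ, iIndepFun (X n) P)
    (hXdist : ∀ n i : ℕ, 1 ≤ i → i ≤ n → ∀ k : ℕ,
      P {ω | X n i ω = k} =
        ENNReal.ofReal (((L ^ (i * d) - L ^ ((i - 1) * d)).choose k : ℝ) *
          pMinus L θ ρ ζ n ((L : ℝ) ^ i) ^ k *
          (1 - pMinus L θ ρ ζ n ((L : ℝ) ^ i)) ^ (L ^ (i * d) - L ^ ((i - 1) * d) - k)))
 :
    ∀ n : ℕ, 1 ≤ n →
      (∫⁻ ω, ENNReal.ofReal (Real.exp ((∑ i ∈ Finset.Icc 1 n, X n i ω : ℕ) : ℝ)) ∂P ≤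
        ENNReal.ofReal (Real.exp 2)) ∧
      ∀ k : ℕ, 1 ≤ k →
        ∫⁻ ω, ((∑ i ∈ Finset.Icc 1 n, X n i ω : ℕ) : ℝ≥0∞) ^ k ∂P ≤
          (Nat.factorial k : ℝ≥0∞) * ENNReal.ofReal (Real.exp 2) := by
  intro n hn
  set e1 := Real.exp 1 with he1
  have he1lb : (2:ℝ) ≤ e1 := by
    have := Real.add_one_le_exp (1:ℝ); rw [he1]; linarith
  have he1ub : e1 < 2.7182818286 := Real.exp_one_lt_d9
  have hζinv : 0 ≤ (ζ n)⁻¹ := inv_nonneg.mpr (hζpos n hn).le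
  have hL1R : (1:ℝ) ≤ (L:ℝ) := by exact_mod_cast (by omega : 1 ≤ L)
  have hLd1 : (1:ℝ) ≤ (L:ℝ) ^ d := by
    calc (1:ℝ) = 1 ^ d := (one_pow d).symm
    _ ≤ (L:ℝ) ^ d := pow_le_pow_left₀ (by norm_num) hL1R d
  have hp0 : ∀ i : ℕ, 0 ≤ pMinus L θ ρ ζ n ((L:ℝ)^i) := by
    intro i
    have hr : 0 ≤ rhoMinus L θ ρ n ((L:ℝ)^i) := le_max_right _ _
    have hmul := mul_nonneg hζinv hr
    have : Real.exp (-(ζ n)⁻¹ * rhoMinus L θ ρ n ((L:ℝ)^i)) ≤ 1 := by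
      rw [Real.exp_le_one_iff]; nlinarith
    simp only [pMinus]; linarith
  have hp1 : ∀ i : ℕ, pMinus L θ ρ ζ n ((L:ℝ)^i) ≤ 1 := by
    intro i
    have := Real.exp_pos (-(ζ n)⁻¹ * rhoMinus L θ ρ n ((L:ℝ)^i))
    simp only [pMinus]; linarith
  have hple : ∀ i : ℕ, pMinus L θ ρ ζ n ((L:ℝ)^i)
      ≤ 1 - Real.exp (-(ζ n)⁻¹ * ρ ((L:ℝ)^i)) := by
    intro i
    have hxnn : (0:ℝ) ≤ (L:ℝ)^i := by positivity
    have hrle : rhoMinus L θ ρ n ((L:ℝ)^i) ≤ ρ ((L:ℝ)^i) := by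
      apply max_le
      · have : (0:ℝ) ≤ (L:ℝ) ^ (-(n:ℝ) * θ) := Real.rpow_nonneg (by positivity) _
        linarith
      · exact hρnn _ hxnn
    have hkey : Real.exp (-(ζ n)⁻¹ * ρ ((L:ℝ)^i))
        ≤ Real.exp (-(ζ n)⁻¹ * rhoMinus L θ ρ n ((L:ℝ)^i)) := by
      apply Real.exp_le_exp.mpr
      have h1 := mul_le_mul_of_nonneg_left hrle hζinv
      nlinarith
    simp only [pMinus]; linarith
  have hNle : ∀ i : ℕ, L ^ ((i-1)*d) ≤ L ^ (i*d) := fun i =>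
    Nat.pow_le_pow_right (by omega) (Nat.mul_le_mul_right _ (by omega))
  have hNcast : ∀ i : ℕ, 1 ≤ i →
      ((L ^ (i*d) - L ^ ((i-1)*d) : ℕ) : ℝ) = ((L:ℝ)^d - 1) * (L:ℝ)^((i-1)*d) := by
    intro i hi
    rw [Nat.cast_sub (hNle i)]
    push_cast
    have h2 : i * d = (i-1) * d + d := by
      have h3 : i - 1 + 1 = i := Nat.succ_pred_eq_of_pos hi
      calc i * d = ((i-1)+1) * d := by rw [h3]
        _ = (i-1)*d + d := by ring
    rw [h2, pow_add]; ring
  have hsum : ∑ i ∈ Finset.Icc 1 n,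
      ((L ^ (i*d) - L ^ ((i-1)*d) : ℕ) : ℝ) * pMinus L θ ρ ζ n ((L:ℝ)^i) ≤ 1 := by
    have hstep : ∑ i ∈ Finset.Icc 1 n,
        ((L ^ (i*d) - L ^ ((i-1)*d) : ℕ) : ℝ) * pMinus L θ ρ ζ n ((L:ℝ)^i)
        ≤ ∑ i ∈ Finset.Icc 1 n, ((L:ℝ)^d - 1) * (L:ℝ)^((i-1)*d)
            * (1 - Real.exp (-(ζ n)⁻¹ * ρ ((L:ℝ)^i))) := by
      refine Finset.sum_le_sum fun i hi => ?_
      have hi1 : 1 ≤ i := (Finset.mem_Icc.mp hi).1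
      rw [hNcast i hi1]
      have hnn : (0:ℝ) ≤ ((L:ℝ)^d - 1) * (L:ℝ)^((i-1)*d) := by
        have h4 : (0:ℝ) ≤ (L:ℝ)^((i-1)*d) := by positivity
        nlinarith
      exact mul_le_mul_of_nonneg_left (hple i) hnn
    have hz := hζeq n hn
    unfold zetaEq at hz
    have htel := aux_tel L d n
    have hexpand : ∑ i ∈ Finset.Icc 1 n, ((L:ℝ)^d - 1) * (L:ℝ)^((i-1)*d)
            * (1 - Real.exp (-(ζ n)⁻¹ * ρ ((L:ℝ)^i)))
        = (∑ i ∈ Finset.Icc 1 n, ((L:ℝ)^d - 1) * (L:ℝ)^((i-1)*d))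
          - ((L:ℝ)^d - 1) * ∑ i ∈ Finset.Icc 1 n,
              (L:ℝ)^((i-1)*d) * Real.exp (-(ζ n)⁻¹ * ρ ((L:ℝ)^i)) := by
      rw [Finset.mul_sum, ← Finset.sum_sub_distrib]
      refine Finset.sum_congr rfl fun i _ => by ring
    rw [hexpand, htel, hz] at hstep
    linarith
  have hInt : ∀ i ∈ Finset.Icc 1 n,
      ∫⁻ ω, ENNReal.ofReal (Real.exp ((X n i ω : ℕ) : ℝ)) ∂P
        = ENNReal.ofReal ((e1 * pMinus L θ ρ ζ n ((L:ℝ)^i)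
            + (1 - pMinus L θ ρ ζ n ((L:ℝ)^i))) ^ (L ^ (i*d) - L ^ ((i-1)*d))) := by
    intro i hi
    obtain ⟨hi1, hin⟩ := Finset.mem_Icc.mp hi
    exact aux_binom_mgf P _ _ (hp0 i) (hp1 i) (X n i) (hXmeas n i) (hXdist n i hi1 hin)
  have hExp : ∫⁻ ω, ENNReal.ofReal (Real.exp ((∑ i ∈ Finset.Icc 1 n, X n i ω : ℕ) : ℝ)) ∂P
      ≤ ENNReal.ofReal (Real.exp 2) := by
    have hrw : (fun ω => ENNReal.ofReal (Real.exp ((∑ i ∈ Finset.Icc 1 n, X n i ω : ℕ) : ℝ)))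
        = fun ω => ∏ i ∈ Finset.Icc 1 n, ENNReal.ofReal (Real.exp ((X n i ω : ℕ) : ℝ)) := by
      funext ω
      rw [Nat.cast_sum, Real.exp_sum, ENNReal.ofReal_prod_of_nonneg]
      exact fun i _ => Real.exp_nonneg _
    have hgmeas : ∀ i : ℕ,
        Measurable fun ω => ENNReal.ofReal (Real.exp ((X n i ω : ℕ) : ℝ)) := fun i =>
      (measurable_from_nat (f := fun m : ℕ => ENNReal.ofReal (Real.exp (m : ℝ)))).comp
        (hXmeas n i)
    have hgind : iIndepFun
        (fun i => fun ω => ENNReal.ofReal (Real.exp ((X n i ω : ℕ) : ℝ))) P :=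
      (hXindep n).comp (fun _ (m : ℕ) => ENNReal.ofReal (Real.exp (m : ℝ)))
        (fun _ => measurable_from_nat)
    rw [hrw, aux_lintegral_prod hgmeas hgind]
    calc ∏ i ∈ Finset.Icc 1 n, ∫⁻ ω, ENNReal.ofReal (Real.exp ((X n i ω : ℕ) : ℝ)) ∂P
        = ∏ i ∈ Finset.Icc 1 n, ENNReal.ofReal ((e1 * pMinus L θ ρ ζ n ((L:ℝ)^i)
            + (1 - pMinus L θ ρ ζ n ((L:ℝ)^i))) ^ (L ^ (i*d) - L ^ ((i-1)*d))) :=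
          Finset.prod_congr rfl hInt
      _ ≤ ∏ i ∈ Finset.Icc 1 n, ENNReal.ofReal (Real.exp ((e1 - 1)
            * pMinus L θ ρ ζ n ((L:ℝ)^i) * ((L ^ (i*d) - L ^ ((i-1)*d) : ℕ) : ℝ))) := by
          refine Finset.prod_le_prod' fun i _ => ENNReal.ofReal_le_ofReal ?_
          set q := pMinus L θ ρ ζ n ((L:ℝ)^i) with hq
          set N := L ^ (i*d) - L ^ ((i-1)*d) with hN
          have hq0 : 0 ≤ q := hp0 i
          have h1 : e1 * q + (1 - q) = 1 + (e1 - 1) * q := by ring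
          have h2 : 1 + (e1-1)*q ≤ Real.exp ((e1-1)*q) := by
            have := Real.add_one_le_exp ((e1-1)*q); linarith
          have h0 : (0:ℝ) ≤ 1 + (e1-1)*q := by nlinarith
          calc (e1 * q + (1 - q)) ^ N ≤ Real.exp ((e1-1)*q) ^ N := by
                rw [h1]; exact pow_le_pow_left₀ h0 h2 N
            _ = Real.exp ((N:ℝ) * ((e1-1)*q)) := (Real.exp_nat_mul _ N).symm
            _ = Real.exp ((e1-1) * q * (N:ℝ)) := by ring_nf
      _ = ENNReal.ofReal (∏ i ∈ Finset.Icc 1 n, Real.exp ((e1 - 1)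
            * pMinus L θ ρ ζ n ((L:ℝ)^i) * ((L ^ (i*d) - L ^ ((i-1)*d) : ℕ) : ℝ))) :=
          (ENNReal.ofReal_prod_of_nonneg fun i _ => Real.exp_nonneg _).symm
      _ = ENNReal.ofReal (Real.exp (∑ i ∈ Finset.Icc 1 n, (e1 - 1)
            * pMinus L θ ρ ζ n ((L:ℝ)^i) * ((L ^ (i*d) - L ^ ((i-1)*d) : ℕ) : ℝ))) := by
          rw [Real.exp_sum]
      _ ≤ ENNReal.ofReal (Real.exp 2) := by
          apply ENNReal.ofReal_le_ofReal
          apply Real.exp_le_exp.mpr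
          have hS : ∑ i ∈ Finset.Icc 1 n, (e1 - 1)
              * pMinus L θ ρ ζ n ((L:ℝ)^i) * ((L ^ (i*d) - L ^ ((i-1)*d) : ℕ) : ℝ)
              = (e1 - 1) * ∑ i ∈ Finset.Icc 1 n,
                  ((L ^ (i*d) - L ^ ((i-1)*d) : ℕ) : ℝ) * pMinus L θ ρ ζ n ((L:ℝ)^i) := by
            rw [Finset.mul_sum]
            exact Finset.sum_congr rfl fun i _ => by ring
          rw [hS]
          nlinarith
  refine ⟨hExp, fun k hk => ?_⟩
  have hpt : ∀ ω : Ω, ((∑ i ∈ Finset.Icc 1 n, X n i ω : ℕ) : ℝ≥0∞) ^ k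
      ≤ (Nat.factorial k : ℝ≥0∞)
        * ENNReal.ofReal (Real.exp ((∑ i ∈ Finset.Icc 1 n, X n i ω : ℕ) : ℝ)) := by
    intro ω
    set m : ℕ := ∑ i ∈ Finset.Icc 1 n, X n i ω with hm
    have h1 : ((m:ℝ))^k ≤ (Nat.factorial k : ℝ) * Real.exp (m:ℝ) := by
      have h2 := Real.pow_div_factorial_le_exp (x := (m:ℝ)) (Nat.cast_nonneg m) k
      rw [div_le_iff₀ (by positivity)] at h2
      linarith
    calc ((m : ℝ≥0∞))^k = ENNReal.ofReal ((m:ℝ)^k) := by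
          rw [← ENNReal.ofReal_natCast m, ← ENNReal.ofReal_pow (Nat.cast_nonneg m)]
      _ ≤ ENNReal.ofReal ((Nat.factorial k : ℝ) * Real.exp (m:ℝ)) :=
          ENNReal.ofReal_le_ofReal h1
      _ = (Nat.factorial k : ℝ≥0∞) * ENNReal.ofReal (Real.exp (m:ℝ)) := by
          rw [ENNReal.ofReal_mul (by positivity), ENNReal.ofReal_natCast]
  calc ∫⁻ ω, ((∑ i ∈ Finset.Icc 1 n, X n i ω : ℕ) : ℝ≥0∞) ^ k ∂P
      ≤ ∫⁻ ω, (Nat.factorial k : ℝ≥0∞)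
          * ENNReal.ofReal (Real.exp ((∑ i ∈ Finset.Icc 1 n, X n i ω : ℕ) : ℝ)) ∂P :=
        lintegral_mono hpt
    _ = (Nat.factorial k : ℝ≥0∞)
        * ∫⁻ ω, ENNReal.ofReal (Real.exp ((∑ i ∈ Finset.Icc 1 n, X n i ω : ℕ) : ℝ)) ∂P :=
        lintegral_const_mul' _ _ (ENNReal.natCast_ne_top _)
    _ ≤ (Nat.factorial k : ℝ≥0∞) * ENNReal.ofReal (Real.exp 2) := mul_le_mul_right hExp _

end
end

section
/- There exist constants c₁, c₂, C > 0 depending only on A_1, A_2, L, d, α and θ such that for all n ≥ 1 and all t ∈ [0, 1/2] one has E[exp(t·W_1^{(n)})] ≤ 1 + t·(1 − c₁·L^{−n(θ−α)}) + C·t², and consequently, setting ε_n := min{c₁/(2C·L^{n(θ−α)}), 1/2}, one has E[exp(ε_n·W_1^{(n)})] ≤ exp(ε_n·(1 − c₂·L^{−n(θ−α)})) for all n ≥ 1. -/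
open MeasureTheory ProbabilityTheory Filter Finset
open scoped ENNReal Classical

noncomputable section

section AuxiliaryLemmas

lemma aux_exp_quad {x : ℝ} (h0 : 0 ≤ x) (h1 : x ≤ 1) : Real.exp x ≤ 1 + x + x ^ 2 := by
  have h := Real.exp_bound' h0 h1 (n := 2) (by norm_num)
  rw [Finset.sum_range_succ, Finset.sum_range_succ, Finset.sum_range_zero] at h
  norm_num [Nat.factorial] at h
  nlinarith [sq_nonneg x]

lemma aux_geom_le {r : ℝ} (hr : 1 < r) (n : ℕ) :
    ∑ i ∈ Finset.Icc 1 n, r ^ i ≤ r ^ n * (r / (r - 1)) := by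
  have hr0 : 0 < r - 1 := by linarith
  have hrp : 0 < r := by linarith
  induction n with
  | zero => simp; positivity
  | succ n ih =>
    rw [Finset.sum_Icc_succ_top (Nat.succ_le_succ (Nat.zero_le n))]
    have h2 : r ^ n * (r / (r - 1)) + r ^ (n + 1) = r ^ (n + 1) * (r / (r - 1)) := by
      field_simp; ring
    linarith [ih]

lemma aux_geom_eq (b : ℝ) (n : ℕ) :
    ∑ i ∈ Finset.Icc 1 n, (b - 1) * b ^ (i - 1) = b ^ n - 1 := by
  induction n with
  | zero => simp
  | succ n ih =>
    rw [Finset.sum_Icc_succ_top (Nat.succ_le_succ (Nat.zero_le n)), ih, Nat.succ_sub_one,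
      pow_succ]
    ring

lemma aux_lintegral_comp_nat {Ω : Type} [MeasurableSpace Ω] (P : Measure Ω)
    (X : Ω → ℕ) (hX : Measurable X) (g : ℕ → ℝ≥0∞) :
    ∫⁻ ω, g (X ω) ∂P = ∑' k, g k * P {ω | X ω = k} := by
  rw [← lintegral_map (measurable_of_countable g) hX, lintegral_countable']
  apply tsum_congr
  intro k
  rw [Measure.map_apply hX (measurableSet_singleton k)]
  rfl

lemma aux_lintegral_indep_prod {Ω : Type} [MeasurableSpace Ω] {P : Measure Ω}
    [IsProbabilityMeasure P] (F : ℕ → Ω → ℝ≥0∞)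
    (hmeas : ∀ i, Measurable (F i))
    (hindep : iIndepFun F P) (s : Finset ℕ) :
    ∫⁻ ω, ∏ i ∈ s, F i ω ∂P = ∏ i ∈ s, ∫⁻ ω, F i ω ∂P := by
  classical
  induction s using Finset.induction_on with
  | empty => simp
  | @insert a s ha ih =>
    have hindep2 : IndepFun (F a) (∏ j ∈ s, F j) P :=
      (hindep.indepFun_finsetProd_of_notMem hmeas ha).symm
    have hmg : Measurable (∏ j ∈ s, F j) := by
      rw [show (∏ j ∈ s, F j) = fun ω => ∏ j ∈ s, F j ω from funext fun ω =>
        Finset.prod_apply ω s F]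
      exact Finset.measurable_prod s fun j _ => hmeas j
    have h := lintegral_mul_eq_lintegral_mul_lintegral_of_indepFun (hmeas a) hmg hindep2
    simp only [Pi.mul_apply, Finset.prod_apply] at h
    calc ∫⁻ ω, ∏ i ∈ insert a s, F i ω ∂P
        = ∫⁻ ω, F a ω * ∏ i ∈ s, F i ω ∂P := by
          simp_rw [Finset.prod_insert ha]
      _ = (∫⁻ ω, F a ω ∂P) * ∫⁻ ω, ∏ i ∈ s, F i ω ∂P := h
      _ = ∏ i ∈ insert a s, ∫⁻ ω, F i ω ∂P := by rw [ih, Finset.prod_insert ha]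

lemma aux_lintegral_exp_binom {Ω : Type} [MeasurableSpace Ω] (P : Measure Ω)
    (X : Ω → ℕ) (hX : Measurable X) (N : ℕ) (p : ℝ) (hp0 : 0 ≤ p) (hp1 : p ≤ 1) (t : ℝ)
    (hdist : ∀ k : ℕ, P {ω | X ω = k} =
      ENNReal.ofReal ((N.choose k : ℝ) * p ^ k * (1 - p) ^ (N - k))) :
    ∫⁻ ω, ENNReal.ofReal (Real.exp (t * (X ω : ℝ))) ∂P
      = ENNReal.ofReal ((p * Real.exp t + (1 - p)) ^ N) := by
  have hq0 : (0:ℝ) ≤ 1 - p := by linarith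
  have hterm : ∀ k : ℕ, 0 ≤ (N.choose k : ℝ) * p ^ k * (1 - p) ^ (N - k) := fun k =>
    mul_nonneg (mul_nonneg (Nat.cast_nonneg _) (pow_nonneg hp0 _)) (pow_nonneg hq0 _)
  rw [aux_lintegral_comp_nat P X hX (fun k => ENNReal.ofReal (Real.exp (t * (k : ℝ))))]
  have hsummand : ∀ k : ℕ,
      ENNReal.ofReal (Real.exp (t * (k : ℝ))) * P {ω | X ω = k}
        = ENNReal.ofReal (Real.exp (t * (k : ℝ)) *
            ((N.choose k : ℝ) * p ^ k * (1 - p) ^ (N - k))) := by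
    intro k
    rw [hdist k, ← ENNReal.ofReal_mul (Real.exp_nonneg _)]
  rw [tsum_congr hsummand,
    tsum_eq_sum (s := Finset.range (N + 1)) (by
      intro k hk
      have hNk : N < k := by simpa using Finset.mem_range.not.mp hk
      simp [Nat.choose_eq_zero_of_lt hNk])]
  rw [← ENNReal.ofReal_sum_of_nonneg
    (fun k _ => mul_nonneg (Real.exp_nonneg _) (hterm k))]
  congr 1
  rw [add_pow]
  refine Finset.sum_congr rfl fun k hk => ?_
  rw [mul_comm t (k : ℝ), Real.exp_nat_mul, mul_pow]
  ring

lemma aux_pMinus_bounds (L : ℕ) (θ : ℝ) (ρ : ℝ → ℝ) (ζ : ℕ → ℝ) (n : ℕ) (x : ℝ)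
    (hζ : 0 < ζ n) : 0 ≤ pMinus L θ ρ ζ n x ∧ pMinus L θ ρ ζ n x ≤ 1 := by
  unfold pMinus rhoMinus
  have hζi : 0 ≤ (ζ n)⁻¹ := inv_nonneg.mpr hζ.le
  have h0 : 0 ≤ max (ρ x - (L:ℝ) ^ (-(n:ℝ) * θ)) 0 := le_max_right _ _
  constructor
  · have h1 : Real.exp (-(ζ n)⁻¹ * max (ρ x - (L:ℝ) ^ (-(n:ℝ) * θ)) 0) ≤ 1 := by
      rw [Real.exp_le_one_iff]
      nlinarith
    linarith
  · nlinarith [Real.exp_pos (-(ζ n)⁻¹ * max (ρ x - (L:ℝ) ^ (-(n:ℝ) * θ)) 0)]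

set_option maxHeartbeats 1000000 in
lemma aux_m_bound (d L : ℕ) (hd : 1 ≤ d) (hL : 2 ≤ L) (hLd3 : 3 ≤ L ^ d)
    (A1 A2 α θ : ℝ) (hA1 : 0 < A1) (hA12 : A1 ≤ A2)
    (hα0 : 0 < α) (hαd : α < (d : ℝ)) (hθα : α < θ)
    (ρ : ℝ → ℝ) (hρnn : ∀ r : ℝ, 0 ≤ r → 0 ≤ ρ r)
    (hρlb : ∀ r : ℝ, 1 ≤ r → A1 * r ^ (-α) ≤ ρ r)
    (hρub : ∀ r : ℝ, 1 ≤ r → ρ r ≤ A2 * r ^ (-α))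
    (ζ : ℕ → ℝ) (n : ℕ) (hn : 1 ≤ n) (hζ : 0 < ζ n) (hZeq : zetaEq d L ρ n (ζ n)) :
    ∑ i ∈ Finset.Icc 1 n,
        ((L ^ (i * d) - L ^ ((i - 1) * d) : ℕ) : ℝ) * pMinus L θ ρ ζ n ((L : ℝ) ^ i)
      ≤ 1 - (min A1 1 / (3 * (A2 * (L:ℝ) ^ ((d:ℝ) - α) / ((L:ℝ) ^ ((d:ℝ) - α) - 1))))
          * (L : ℝ) ^ (-(n : ℝ) * (θ - α)) := by
  have hc2 : (2:ℝ) ≤ (L:ℝ) := by exact_mod_cast hL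
  have hc1 : (1:ℝ) < (L:ℝ) := by linarith
  have hc0 : (0:ℝ) < (L:ℝ) := by linarith
  have hA2 : 0 < A2 := lt_of_lt_of_le hA1 hA12
  have hdα : (0:ℝ) < (d:ℝ) - α := by linarith
  have hζi : 0 ≤ (ζ n)⁻¹ := inv_nonneg.mpr hζ.le
  set r : ℝ := (L:ℝ) ^ ((d:ℝ) - α) with hr
  have hr1 : 1 < r := (Real.one_lt_rpow_iff_of_pos hc0).mpr (Or.inl ⟨hc1, hdα⟩)
  have hr0 : 0 < r := by linarith
  set B : ℝ := A2 * r / (r - 1) with hB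
  have hB0 : 0 < B := div_pos (mul_pos hA2 hr0) (by linarith)
  set τ : ℝ := (L:ℝ) ^ (-(n:ℝ) * θ) with hτ
  have hτ0 : 0 < τ := Real.rpow_pos_of_pos hc0 _
  have hLpow1 : ∀ i : ℕ, (1:ℝ) ≤ (L:ℝ) ^ i := fun i => one_le_pow₀ hc1.le
  set E : ℕ → ℝ := fun i => Real.exp (-(ζ n)⁻¹ * ρ ((L:ℝ) ^ i)) with hE
  set Em : ℕ → ℝ := fun i => Real.exp (-(ζ n)⁻¹ * rhoMinus L θ ρ n ((L:ℝ) ^ i)) with hEm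
  set Nr : ℕ → ℝ := fun i => ((L:ℝ) ^ d - 1) * (L:ℝ) ^ ((i - 1) * d) with hNr
  have hbd1 : (1:ℝ) ≤ (L:ℝ) ^ d := hLpow1 d
  have hNr0 : ∀ i, 0 ≤ Nr i := fun i =>
    mul_nonneg (by linarith) (by positivity)
  have hNrEq : ∀ i : ℕ, 1 ≤ i → Nr i = (L:ℝ) ^ (i * d) - (L:ℝ) ^ ((i - 1) * d) := by
    intro i hi
    obtain ⟨j, rfl⟩ : ∃ j, i = j + 1 := ⟨i - 1, (Nat.succ_pred_eq_of_pos hi).symm⟩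
    simp only [hNr, Nat.add_sub_cancel]
    rw [show (j + 1) * d = j * d + d by ring, pow_add]
    ring
  -- power juggling
  have hb : ∀ m : ℕ, (L:ℝ) ^ (m * d) = ((L:ℝ) ^ d) ^ m := fun m => by
    rw [mul_comm, pow_mul]
  have hpowr : ∀ i : ℕ, (L:ℝ) ^ (i * d) * ((L:ℝ) ^ i) ^ (-α) = r ^ i := by
    intro i
    rw [← Real.rpow_natCast (L:ℝ) (i * d), ← Real.rpow_natCast (L:ℝ) i,
      ← Real.rpow_mul hc0.le, ← Real.rpow_add hc0, hr,
      ← Real.rpow_natCast ((L:ℝ) ^ ((d:ℝ) - α)) i, ← Real.rpow_mul hc0.le]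
    congr 1
    push_cast
    ring
  -- the zeta equation, rearranged
  have hZsum : ∑ i ∈ Finset.Icc 1 n, Nr i * E i = (L:ℝ) ^ (n * d) - 2 := by
    unfold zetaEq at hZeq
    rw [← hZeq, Finset.mul_sum]
    exact Finset.sum_congr rfl fun i _ => by simp only [hNr]; ring
  have hSsum : ∑ i ∈ Finset.Icc 1 n, Nr i = (L:ℝ) ^ (n * d) - 1 := by
    rw [hb n, ← aux_geom_eq ((L:ℝ) ^ d) n]
    exact Finset.sum_congr rfl fun i _ => by simp only [hNr]; rw [hb (i - 1)]
  -- upper bound on ζ n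
  have hζub : ζ n ≤ B * r ^ n := by
    have hone : ∑ i ∈ Finset.Icc 1 n, (Nr i - Nr i * E i) = 1 := by
      rw [Finset.sum_sub_distrib, hSsum, hZsum]; ring
    have hterm : ∀ i ∈ Finset.Icc 1 n, Nr i - Nr i * E i ≤ (ζ n)⁻¹ * (A2 * r ^ i) := by
      intro i hi
      obtain ⟨hi1, hin⟩ := Finset.mem_Icc.mp hi
      have hρi0 : 0 ≤ ρ ((L:ℝ) ^ i) := hρnn _ (by positivity)
      have hexp := Real.add_one_le_exp (-(ζ n)⁻¹ * ρ ((L:ℝ) ^ i))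
      have h1E : 1 - E i ≤ (ζ n)⁻¹ * ρ ((L:ℝ) ^ i) := by
        simp only [hE]; nlinarith
      have hE1 : E i ≤ 1 := by
        simp only [hE]; rw [Real.exp_le_one_iff]; nlinarith
      have hNrle : Nr i ≤ (L:ℝ) ^ (i * d) := by
        rw [hNrEq i hi1]
        nlinarith [pow_pos hc0 ((i - 1) * d)]
      calc Nr i - Nr i * E i = Nr i * (1 - E i) := by ring
        _ ≤ (L:ℝ) ^ (i * d) * ((ζ n)⁻¹ * ρ ((L:ℝ) ^ i)) := by
            apply mul_le_mul hNrle h1E (by linarith) (by positivity)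
        _ ≤ (L:ℝ) ^ (i * d) * ((ζ n)⁻¹ * (A2 * ((L:ℝ) ^ i) ^ (-α))) := by
            apply mul_le_mul_of_nonneg_left
              (mul_le_mul_of_nonneg_left (hρub _ (hLpow1 i)) hζi) (by positivity)
        _ = (ζ n)⁻¹ * (A2 * r ^ i) := by rw [← hpowr i]; ring
    have hsum := Finset.sum_le_sum hterm
    rw [hone] at hsum
    have h2 : ∑ i ∈ Finset.Icc 1 n, (ζ n)⁻¹ * (A2 * r ^ i)
        = (ζ n)⁻¹ * A2 * ∑ i ∈ Finset.Icc 1 n, r ^ i := by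
      rw [Finset.mul_sum]
      exact Finset.sum_congr rfl fun i _ => by ring
    have h4 : (1:ℝ) ≤ (ζ n)⁻¹ * (B * r ^ n) := by
      calc (1:ℝ) ≤ (ζ n)⁻¹ * A2 * ∑ i ∈ Finset.Icc 1 n, r ^ i := by rw [← h2]; exact hsum
        _ ≤ (ζ n)⁻¹ * A2 * (r ^ n * (r / (r - 1))) := by
            apply mul_le_mul_of_nonneg_left (aux_geom_le hr1 n) (by positivity)
        _ = (ζ n)⁻¹ * (B * r ^ n) := by rw [hB]; ring
    calc ζ n = ζ n * 1 := by ring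
      _ ≤ ζ n * ((ζ n)⁻¹ * (B * r ^ n)) := mul_le_mul_of_nonneg_left h4 hζ.le
      _ = B * r ^ n := by field_simp
  -- per-term lower bound for the difference
  have hlow : ∀ i ∈ Finset.Icc 1 n,
      Nr i * E i * ((ζ n)⁻¹ * (min A1 1 * τ)) ≤ Nr i * (Em i - E i) := by
    intro i hi
    obtain ⟨hi1, hin⟩ := Finset.mem_Icc.mp hi
    have hρi0 : 0 ≤ ρ ((L:ℝ) ^ i) := hρnn _ (by positivity)
    have hdiff : ρ ((L:ℝ) ^ i) - rhoMinus L θ ρ n ((L:ℝ) ^ i) = min (ρ ((L:ℝ) ^ i)) τ := by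
      unfold rhoMinus
      rw [← hτ]
      rcases le_total (ρ ((L:ℝ) ^ i)) τ with h | h
      · rw [max_eq_right (by linarith), min_eq_left h]; ring
      · rw [max_eq_left (by linarith), min_eq_right h]; ring
    have hmono : τ ≤ ((L:ℝ) ^ i) ^ (-α) := by
      rw [hτ, ← Real.rpow_natCast (L:ℝ) i, ← Real.rpow_mul hc0.le]
      apply Real.rpow_le_rpow_of_exponent_le hc1.le
      have hi' : (i:ℝ) ≤ (n:ℝ) := by exact_mod_cast hin
      have hi1' : (1:ℝ) ≤ (i:ℝ) := by exact_mod_cast hi1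
      have e1 : (i:ℝ) * α ≤ (n:ℝ) * α := mul_le_mul_of_nonneg_right hi' hα0.le
      have e2 : (n:ℝ) * α ≤ (n:ℝ) * θ :=
        mul_le_mul_of_nonneg_left hθα.le (by positivity)
      linarith
    have hA1τ : A1 * τ ≤ ρ ((L:ℝ) ^ i) :=
      le_trans (mul_le_mul_of_nonneg_left hmono hA1.le) (hρlb _ (hLpow1 i))
    have hminτ : min A1 1 * τ ≤ min (ρ ((L:ℝ) ^ i)) τ := by
      apply le_min
      · exact le_trans (mul_le_mul_of_nonneg_right (min_le_left _ _) hτ0.le) hA1τ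
      · simpa using mul_le_mul_of_nonneg_right (min_le_right A1 1) hτ0.le
    have hE0 : 0 < E i := Real.exp_pos _
    have hfac : Em i = E i * Real.exp ((ζ n)⁻¹ *
        (ρ ((L:ℝ) ^ i) - rhoMinus L θ ρ n ((L:ℝ) ^ i))) := by
      simp only [hE, hEm, ← Real.exp_add]
      congr 1
      ring
    have h1 : (ζ n)⁻¹ * (min A1 1 * τ) ≤ (ζ n)⁻¹ *
        (ρ ((L:ℝ) ^ i) - rhoMinus L θ ρ n ((L:ℝ) ^ i)) := by
      rw [hdiff]; exact mul_le_mul_of_nonneg_left hminτ hζi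
    have h2 := Real.add_one_le_exp ((ζ n)⁻¹ *
        (ρ ((L:ℝ) ^ i) - rhoMinus L θ ρ n ((L:ℝ) ^ i)))
    have hEmE : E i * ((ζ n)⁻¹ * (min A1 1 * τ)) ≤ Em i - E i := by
      rw [hfac]
      calc E i * ((ζ n)⁻¹ * (min A1 1 * τ))
          ≤ E i * (Real.exp ((ζ n)⁻¹ *
              (ρ ((L:ℝ) ^ i) - rhoMinus L θ ρ n ((L:ℝ) ^ i))) - 1) := by
            apply mul_le_mul_of_nonneg_left (by linarith) hE0.le
        _ = E i * Real.exp ((ζ n)⁻¹ *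
              (ρ ((L:ℝ) ^ i) - rhoMinus L θ ρ n ((L:ℝ) ^ i))) - E i := by ring
    calc Nr i * E i * ((ζ n)⁻¹ * (min A1 1 * τ))
        = Nr i * (E i * ((ζ n)⁻¹ * (min A1 1 * τ))) := by ring
      _ ≤ Nr i * (Em i - E i) := mul_le_mul_of_nonneg_left hEmE (hNr0 i)
  -- assemble
  set m : ℝ := ∑ i ∈ Finset.Icc 1 n,
      ((L ^ (i * d) - L ^ ((i - 1) * d) : ℕ) : ℝ) * pMinus L θ ρ ζ n ((L : ℝ) ^ i) with hm
  have hmEq : m = ∑ i ∈ Finset.Icc 1 n, Nr i * (1 - Em i) := by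
    rw [hm]
    apply Finset.sum_congr rfl
    intro i hi
    obtain ⟨hi1, hin⟩ := Finset.mem_Icc.mp hi
    have hcast : ((L ^ (i * d) - L ^ ((i - 1) * d) : ℕ) : ℝ)
        = (L:ℝ) ^ (i * d) - (L:ℝ) ^ ((i - 1) * d) := by
      have hle : L ^ ((i - 1) * d) ≤ L ^ (i * d) :=
        Nat.pow_le_pow_right (by omega) (Nat.mul_le_mul_right d (by omega))
      push_cast [hle]
      ring
    rw [hcast, ← hNrEq i hi1]
    simp only [pMinus, hEm]
  have hsum2 := Finset.sum_le_sum hlow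
  have hL3 : (3:ℝ) ≤ (L:ℝ) ^ (n * d) := by
    have h1 : (3:ℝ) ≤ (L:ℝ) ^ d := by exact_mod_cast (by exact_mod_cast hLd3 : (3:ℕ) ≤ L ^ d)
    calc (3:ℝ) ≤ (L:ℝ) ^ d := h1
      _ ≤ (L:ℝ) ^ (n * d) := pow_le_pow_right₀ hc1.le (Nat.le_mul_of_pos_left d (by omega))
  have hLHS : ∑ i ∈ Finset.Icc 1 n, Nr i * E i * ((ζ n)⁻¹ * (min A1 1 * τ))
      = ((L:ℝ) ^ (n * d) - 2) * ((ζ n)⁻¹ * (min A1 1 * τ)) := by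
    rw [← Finset.sum_mul, hZsum]
  have hRHS : ∑ i ∈ Finset.Icc 1 n, Nr i * (Em i - E i) = 1 - m := by
    have e1 : ∑ i ∈ Finset.Icc 1 n, Nr i * (Em i - E i)
        = ∑ i ∈ Finset.Icc 1 n, Nr i * Em i - ∑ i ∈ Finset.Icc 1 n, Nr i * E i := by
      rw [← Finset.sum_sub_distrib]
      exact Finset.sum_congr rfl fun i _ => by ring
    have e2 : m = ∑ i ∈ Finset.Icc 1 n, Nr i - ∑ i ∈ Finset.Icc 1 n, Nr i * Em i := by
      rw [hmEq, ← Finset.sum_sub_distrib]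
      exact Finset.sum_congr rfl fun i _ => by ring
    rw [e1, hZsum]
    rw [hSsum] at e2
    linarith
  rw [hLHS, hRHS] at hsum2
  -- ζ⁻¹ lower bound and final computation
  have hBr0 : 0 < B * r ^ n := by positivity
  have hζinv : (B * r ^ n)⁻¹ ≤ (ζ n)⁻¹ := by
    apply inv_anti₀ hζ hζub
  have hmin0 : 0 < min A1 1 := lt_min hA1 one_pos
  have hstep : (L:ℝ) ^ (n * d) / 3 * ((B * r ^ n)⁻¹ * (min A1 1 * τ))
      ≤ ((L:ℝ) ^ (n * d) - 2) * ((ζ n)⁻¹ * (min A1 1 * τ)) := by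
    apply mul_le_mul (by linarith) (mul_le_mul_of_nonneg_right hζinv (by positivity))
      (by positivity) (by linarith)
  have hcomb : (L:ℝ) ^ ((n:ℝ) * (d:ℝ)) * ((L:ℝ) ^ ((n:ℝ) * ((d:ℝ) - α)))⁻¹
      * (L:ℝ) ^ (-(n:ℝ) * θ) = (L:ℝ) ^ (-(n:ℝ) * (θ - α)) := by
    rw [← Real.rpow_neg hc0.le, ← Real.rpow_add hc0, ← Real.rpow_add hc0]
    congr 1
    ring
  have hLnd : (L:ℝ) ^ (n * d) = (L:ℝ) ^ ((n:ℝ) * (d:ℝ)) := by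
    rw [← Real.rpow_natCast (L:ℝ) (n * d)]
    congr 1
    push_cast
    ring
  have hrn : r ^ n = (L:ℝ) ^ ((n:ℝ) * ((d:ℝ) - α)) := by
    rw [hr, ← Real.rpow_natCast ((L:ℝ) ^ ((d:ℝ) - α)) n, ← Real.rpow_mul hc0.le]
    congr 1
    ring
  have hfinal : (L:ℝ) ^ (n * d) / 3 * ((B * r ^ n)⁻¹ * (min A1 1 * τ))
      = (min A1 1 / (3 * B)) * (L:ℝ) ^ (-(n:ℝ) * (θ - α)) := by
    calc (L:ℝ) ^ (n * d) / 3 * ((B * r ^ n)⁻¹ * (min A1 1 * τ))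
        = (min A1 1 / (3 * B)) * ((L:ℝ) ^ ((n:ℝ) * (d:ℝ))
            * ((L:ℝ) ^ ((n:ℝ) * ((d:ℝ) - α)))⁻¹ * (L:ℝ) ^ (-(n:ℝ) * θ)) := by
          rw [hLnd, hrn, hτ]
          ring
      _ = (min A1 1 / (3 * B)) * (L:ℝ) ^ (-(n:ℝ) * (θ - α)) := by rw [hcomb]
  linarith [hfinal ▸ hstep, hsum2]


end AuxiliaryLemmas

set_option maxHeartbeats 2000000 in
/-- Moment generating function bounds for `W₁^{(n)}`. -/
theorem mgf_W_one_bounds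
    (d L : ℕ) (hd : 1 ≤ d) (hL : 2 ≤ L)
    (A1 A2 α : ℝ) (hA1 : 0 < A1) (hA12 : A1 ≤ A2)
    (hα0 : 0 < α) (hαd : α < (d : ℝ))
    (ρ : ℝ → ℝ) (hρ0 : ρ 0 = 0)
    (hρnn : ∀ r : ℝ, 0 ≤ r → 0 ≤ ρ r)
    (hρlb : ∀ r : ℝ, 1 ≤ r → A1 * r ^ (-α) ≤ ρ r)
    (hρub : ∀ r : ℝ, 1 ≤ r → ρ r ≤ A2 * r ^ (-α))
    (θ : ℝ) (hα56 : α < 5 * (d : ℝ) / 6) (hθα : α < θ)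
    (hθ1 : α ≤ (d : ℝ) / 2 → θ < 4 * α / 3)
    (hθ2 : (d : ℝ) / 2 < α → α ≤ 2 * (d : ℝ) / 3 → θ < 2 * α - (d : ℝ) / 2)
    (hθ3 : 2 * (d : ℝ) / 3 < α → θ < 5 * α / 2 - (d : ℝ))
    (ζ : ℕ → ℝ) (hζpos : ∀ n : ℕ, 1 ≤ n → 0 < ζ n)
    (hζeq : ∀ n : ℕ, 1 ≤ n → zetaEq d L ρ n (ζ n))
    {Ω : Type} [MeasurableSpace Ω] (P : Measure Ω) [IsProbabilityMeasure P]
    (X : ℕ → ℕ → Ω → ℕ)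
    (hXmeas : ∀ n i, Measurable (X n i))
    (hXindep : ∀ n : ℕ, iIndepFun (X n) P)
    (hXdist : ∀ n i : ℕ, 1 ≤ i → i ≤ n → ∀ k : ℕ,
      P {ω | X n i ω = k} =
        ENNReal.ofReal (((L ^ (i * d) - L ^ ((i - 1) * d)).choose k : ℝ) *
          pMinus L θ ρ ζ n ((L : ℝ) ^ i) ^ k *
          (1 - pMinus L θ ρ ζ n ((L : ℝ) ^ i)) ^ (L ^ (i * d) - L ^ ((i - 1) * d) - k)))
 :
    ∃ c₁ c₂ C : ℝ, 0 < c₁ ∧ 0 < c₂ ∧ 0 < C ∧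
      (∀ n : ℕ, 1 ≤ n → ∀ t : ℝ, 0 ≤ t → t ≤ 1 / 2 →
        ∫⁻ ω, ENNReal.ofReal
            (Real.exp (t * ((∑ i ∈ Finset.Icc 1 n, X n i ω : ℕ) : ℝ))) ∂P ≤
          ENNReal.ofReal
            (1 + t * (1 - c₁ * (L : ℝ) ^ (-(n : ℝ) * (θ - α))) + C * t ^ 2)) ∧
      (∀ n : ℕ, 1 ≤ n →
        ∫⁻ ω, ENNReal.ofReal
            (Real.exp (min (c₁ / (2 * C * (L : ℝ) ^ ((n : ℝ) * (θ - α)))) (1 / 2) *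
              ((∑ i ∈ Finset.Icc 1 n, X n i ω : ℕ) : ℝ))) ∂P ≤
          ENNReal.ofReal
            (Real.exp (min (c₁ / (2 * C * (L : ℝ) ^ ((n : ℝ) * (θ - α)))) (1 / 2) *
              (1 - c₂ * (L : ℝ) ^ (-(n : ℝ) * (θ - α)))))) := by
  have hc2 : (2:ℝ) ≤ (L:ℝ) := by exact_mod_cast hL
  have hc1 : (1:ℝ) < (L:ℝ) := by linarith
  have hc0 : (0:ℝ) < (L:ℝ) := by linarith
  have hA2 : 0 < A2 := lt_of_lt_of_le hA1 hA12
  have hdα : (0:ℝ) < (d:ℝ) - α := by linarith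
  -- rule out the degenerate case `L ^ d = 2`
  have hLd3 : 3 ≤ L ^ d := by
    by_contra hcon
    have hLd2 : L ^ d = 2 := by
      have h1 : 2 ≤ L ^ d := by
        calc 2 ≤ L := hL
          _ = L ^ 1 := (pow_one L).symm
          _ ≤ L ^ d := Nat.pow_le_pow_right (by omega) hd
      omega
    have h := hζeq 1 le_rfl
    unfold zetaEq at h
    rw [Finset.Icc_self, Finset.sum_singleton] at h
    have hcast : ((L:ℝ)) ^ d = 2 := by exact_mod_cast congrArg (Nat.cast (R := ℝ)) hLd2
    rw [show (1 - 1) * d = 0 by simp, pow_zero, one_mul, one_mul d, hcast] at h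
    have hexp := Real.exp_pos (-(ζ 1)⁻¹ * ρ ((L:ℝ) ^ 1))
    linarith
  -- constants
  set r : ℝ := (L:ℝ) ^ ((d:ℝ) - α) with hrdef
  have hr1 : 1 < r := (Real.one_lt_rpow_iff_of_pos hc0).mpr (Or.inl ⟨hc1, hdα⟩)
  set B : ℝ := A2 * r / (r - 1) with hBdef
  have hB0 : 0 < B := div_pos (mul_pos hA2 (by linarith)) (by linarith)
  set c₁ : ℝ := min A1 1 / (3 * B) with hc₁def
  have hc₁0 : 0 < c₁ := div_pos (lt_min hA1 one_pos) (by positivity)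
  -- the main MGF bound
  have hmain : ∀ n : ℕ, 1 ≤ n → ∀ t : ℝ, 0 ≤ t → t ≤ 1 / 2 →
      ∫⁻ ω, ENNReal.ofReal
          (Real.exp (t * ((∑ i ∈ Finset.Icc 1 n, X n i ω : ℕ) : ℝ))) ∂P ≤
        ENNReal.ofReal
          (1 + t * (1 - c₁ * (L : ℝ) ^ (-(n : ℝ) * (θ - α))) + 4 * t ^ 2) := by
    intro n hn t ht0 ht2
    have hζn := hζpos n hn
    set N : ℕ → ℕ := fun i => L ^ (i * d) - L ^ ((i - 1) * d) with hNdef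
    set p : ℕ → ℝ := fun i => pMinus L θ ρ ζ n ((L:ℝ) ^ i) with hpdef
    have hp0 : ∀ i, 0 ≤ p i := fun i => (aux_pMinus_bounds L θ ρ ζ n _ hζn).1
    have hp1 : ∀ i, p i ≤ 1 := fun i => (aux_pMinus_bounds L θ ρ ζ n _ hζn).2
    set δ : ℝ := c₁ * (L:ℝ) ^ (-(n:ℝ) * (θ - α)) with hδdef
    have hδ0 : 0 < δ := mul_pos hc₁0 (Real.rpow_pos_of_pos hc0 _)
    set msum : ℝ := ∑ i ∈ Finset.Icc 1 n, (N i : ℝ) * p i with hmdef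
    have hm1 : msum ≤ 1 - δ :=
      aux_m_bound d L hd hL hLd3 A1 A2 α θ hA1 hA12 hα0 hαd hθα ρ hρnn hρlb hρub
        ζ n hn hζn (hζeq n hn)
    have hm0 : 0 ≤ msum :=
      Finset.sum_nonneg fun i _ => mul_nonneg (Nat.cast_nonneg _) (hp0 i)
    have hδ1 : δ ≤ 1 := by linarith
    set u : ℝ := Real.exp t with hudef
    have hu1 : 1 ≤ u := Real.one_le_exp ht0
    -- the lintegral as a product
    set g : ℕ → ℝ≥0∞ := fun k => ENNReal.ofReal (Real.exp (t * (k : ℝ))) with hgdef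
    have hFmeas : ∀ i : ℕ, Measurable (g ∘ X n i) := fun i =>
      (measurable_of_countable g).comp (hXmeas n i)
    have hFindep : iIndepFun (fun i => g ∘ X n i) P :=
      (hXindep n).comp (fun _ => g) (fun _ => measurable_of_countable g)
    have hre : ∀ ω, ENNReal.ofReal
        (Real.exp (t * ((∑ i ∈ Finset.Icc 1 n, X n i ω : ℕ) : ℝ)))
        = ∏ i ∈ Finset.Icc 1 n, (g ∘ X n i) ω := by
      intro ω
      rw [Nat.cast_sum, Finset.mul_sum, Real.exp_sum,
        ENNReal.ofReal_prod_of_nonneg (fun i _ => Real.exp_nonneg _)]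
      rfl
    have hfac : ∀ i ∈ Finset.Icc 1 n, ∫⁻ ω, (g ∘ X n i) ω ∂P
        = ENNReal.ofReal ((p i * u + (1 - p i)) ^ N i) := by
      intro i hi
      obtain ⟨hi1, hin⟩ := Finset.mem_Icc.mp hi
      exact aux_lintegral_exp_binom P (X n i) (hXmeas n i) (N i) (p i)
        (hp0 i) (hp1 i) t (hXdist n i hi1 hin)
    have hfc0 : ∀ i ∈ Finset.Icc 1 n, (0:ℝ) ≤ (p i * u + (1 - p i)) ^ N i := by
      intro i _
      have := hp0 i; have := hp1 i
      apply pow_nonneg; nlinarith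
    -- the real product bound
    have hfactor : ∀ i ∈ Finset.Icc 1 n,
        (p i * u + (1 - p i)) ^ N i ≤ Real.exp ((N i : ℝ) * (p i * (u - 1))) := by
      intro i _
      have h1 := Real.add_one_le_exp (p i * (u - 1))
      have := hp0 i
      calc (p i * u + (1 - p i)) ^ N i
          ≤ Real.exp (p i * (u - 1)) ^ N i := by
            apply pow_le_pow_left₀ (by nlinarith) (by nlinarith)
        _ = Real.exp ((N i : ℝ) * (p i * (u - 1))) := (Real.exp_nat_mul _ _).symm
    have hnum : Real.exp (msum * (u - 1)) ≤ 1 + t * (1 - δ) + 4 * t ^ 2 := by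
      have hu2 : u ≤ 1 + t + t ^ 2 := by
        have := aux_exp_quad ht0 (by linarith)
        linarith
      set x : ℝ := msum * (u - 1) with hxdef
      have hx0 : 0 ≤ x := mul_nonneg hm0 (by linarith)
      have hxle : x ≤ (1 - δ) * (t + t ^ 2) := by
        apply mul_le_mul hm1 (by linarith) (by linarith) (by linarith)
      have htt : (0:ℝ) ≤ t + t ^ 2 := by positivity
      have hδtt : 0 ≤ δ * (t + t ^ 2) := mul_nonneg hδ0.le htt
      have h32 : x ≤ (3 / 2) * t := by nlinarith [mul_le_mul_of_nonneg_left ht2 ht0]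
      have hx1 : x ≤ 1 := by nlinarith
      have hq := aux_exp_quad hx0 hx1
      have hsq : x ^ 2 ≤ ((3 / 2) * t) ^ 2 := pow_le_pow_left₀ hx0 h32 2
      nlinarith [mul_nonneg hδ0.le (sq_nonneg t)]
    have hreal : ∏ i ∈ Finset.Icc 1 n, (p i * u + (1 - p i)) ^ N i
        ≤ 1 + t * (1 - δ) + 4 * t ^ 2 := by
      calc ∏ i ∈ Finset.Icc 1 n, (p i * u + (1 - p i)) ^ N i
          ≤ ∏ i ∈ Finset.Icc 1 n, Real.exp ((N i : ℝ) * (p i * (u - 1))) :=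
            Finset.prod_le_prod hfc0 hfactor
        _ = Real.exp (∑ i ∈ Finset.Icc 1 n, (N i : ℝ) * (p i * (u - 1))) :=
            (Real.exp_sum _ _).symm
        _ = Real.exp (msum * (u - 1)) := by
            rw [hmdef, Finset.sum_mul]
            congr 1
            exact Finset.sum_congr rfl fun i _ => by ring
        _ ≤ 1 + t * (1 - δ) + 4 * t ^ 2 := hnum
    calc ∫⁻ ω, ENNReal.ofReal
          (Real.exp (t * ((∑ i ∈ Finset.Icc 1 n, X n i ω : ℕ) : ℝ))) ∂P
        = ∫⁻ ω, ∏ i ∈ Finset.Icc 1 n, (g ∘ X n i) ω ∂P := lintegral_congr hre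
      _ = ∏ i ∈ Finset.Icc 1 n, ∫⁻ ω, (g ∘ X n i) ω ∂P :=
          aux_lintegral_indep_prod _ hFmeas hFindep _
      _ = ∏ i ∈ Finset.Icc 1 n, ENNReal.ofReal ((p i * u + (1 - p i)) ^ N i) :=
          Finset.prod_congr rfl hfac
      _ = ENNReal.ofReal (∏ i ∈ Finset.Icc 1 n, (p i * u + (1 - p i)) ^ N i) :=
          (ENNReal.ofReal_prod_of_nonneg hfc0).symm
      _ ≤ ENNReal.ofReal (1 + t * (1 - δ) + 4 * t ^ 2) :=
          ENNReal.ofReal_le_ofReal hreal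
  refine ⟨c₁, c₁ / 2, 4, hc₁0, by positivity, by norm_num, hmain, ?_⟩
  -- second statement
  intro n hn
  have hK0 : (0:ℝ) < (L:ℝ) ^ ((n:ℝ) * (θ - α)) := Real.rpow_pos_of_pos hc0 _
  set ε : ℝ := min (c₁ / (2 * 4 * (L:ℝ) ^ ((n:ℝ) * (θ - α)))) (1 / 2) with hεdef
  have hε0 : 0 < ε := lt_min (by positivity) (by norm_num)
  have hε2 : ε ≤ 1 / 2 := min_le_right _ _
  refine le_trans (hmain n hn ε hε0.le hε2) (ENNReal.ofReal_le_ofReal ?_)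
  set δ : ℝ := c₁ * (L:ℝ) ^ (-(n:ℝ) * (θ - α)) with hδdef
  have hneg : (L:ℝ) ^ (-(n:ℝ) * (θ - α)) = ((L:ℝ) ^ ((n:ℝ) * (θ - α)))⁻¹ := by
    rw [← Real.rpow_neg hc0.le]
    congr 1
    ring
  have hδ' : δ = c₁ * ((L:ℝ) ^ ((n:ℝ) * (θ - α)))⁻¹ := by rw [hδdef, hneg]
  have hεle : ε ≤ c₁ / (2 * 4 * (L:ℝ) ^ ((n:ℝ) * (θ - α))) := min_le_left _ _
  have hkey : c₁ / (2 * 4 * (L:ℝ) ^ ((n:ℝ) * (θ - α)))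
      = c₁ * ((L:ℝ) ^ ((n:ℝ) * (θ - α)))⁻¹ / 8 := by
    ring
  have h4ε : 4 * ε ≤ δ / 2 := by
    rw [hδ']
    rw [hkey] at hεle
    linarith
  have harg : ε * (1 - c₁ / 2 * (L:ℝ) ^ (-(n:ℝ) * (θ - α))) = ε * (1 - δ / 2) := by
    rw [hδdef]
    ring
  calc 1 + ε * (1 - δ) + 4 * ε ^ 2
      ≤ 1 + ε * (1 - δ / 2) := by nlinarith [mul_le_mul_of_nonneg_right h4ε hε0.le]
    _ ≤ Real.exp (ε * (1 - δ / 2)) := by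
        linarith [Real.add_one_le_exp (ε * (1 - δ / 2))]
    _ = Real.exp (ε * (1 - c₁ / 2 * (L:ℝ) ^ (-(n:ℝ) * (θ - α)))) := by rw [harg]


end
end

section
/- There exist a constant c > 0 and a threshold n₀ ≥ 1, both depending only on A_1, A_2, L, d, α and θ, such that for all n ≥ n₀ and all integers k ≥ 1, if V_1, V_2, …, V_k are i.i.d. random variables each distributed as W_1^{(n)}, then P( min_{1≤j≤k} ∑_{i=1}^j (V_i − 1) > −1 ) ≤ P( ∑_{i=1}^k V_i ≥ k ) ≤ exp(−c·k·L^{−2n(θ−α)}). -/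
open MeasureTheory ProbabilityTheory Filter Finset
open scoped ENNReal Classical

noncomputable section

section Aux

private lemma binomial_facts {Ω : Type} [MeasurableSpace Ω] (P : Measure Ω)
    [IsProbabilityMeasure P]
    (X : Ω → ℕ) (hX : Measurable X) (N : ℕ) (p : ℝ) (hp0 : 0 ≤ p) (hp1 : p ≤ 1)
    (hdist : ∀ k : ℕ, P {ω | X ω = k} =
      ENNReal.ofReal ((N.choose k : ℝ) * p ^ k * (1 - p) ^ (N - k))) (t : ℝ) :
    Integrable (fun ω => Real.exp (t * (X ω : ℝ))) P ∧
      mgf (fun ω => (X ω : ℝ)) P t = (p * Real.exp t + (1 - p)) ^ N := by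
  have hq0 : (0:ℝ) ≤ 1 - p := by linarith
  have hnn : ∀ k : ℕ, 0 ≤ (N.choose k : ℝ) * p ^ k * (1 - p) ^ (N - k) := fun k => by positivity
  have hae : ∀ᵐ ω ∂P, X ω ≤ N := by
    rw [ae_iff]
    have hsub : {ω | ¬ X ω ≤ N} ⊆ ⋃ k : ℕ, {ω | X ω = N + 1 + k} := by
      intro ω hω
      simp only [Set.mem_setOf_eq, not_le] at hω
      exact Set.mem_iUnion.2 ⟨X ω - (N + 1), by simp only [Set.mem_setOf_eq]; omega⟩
    refine measure_mono_null hsub (measure_iUnion_null fun k => ?_)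
    rw [hdist, Nat.choose_eq_zero_of_lt (by omega)]
    simp
  have hmeasset : ∀ k : ℕ, MeasurableSet {ω | X ω = k} := fun k =>
    hX (measurableSet_singleton k)
  set g : Ω → ℝ := fun ω => ∑ k ∈ Finset.range (N + 1),
    Set.indicator {ω' | X ω' = k} (fun _ => Real.exp (t * k)) ω with hg
  have hterm_int : ∀ k ∈ Finset.range (N + 1),
      Integrable (fun ω => Set.indicator {ω' | X ω' = k} (fun _ => Real.exp (t * k)) ω) P :=
    fun k _ => (integrable_const _).indicator (hmeasset k)
  have hcongr : (fun ω => Real.exp (t * (X ω : ℝ))) =ᵐ[P] g := by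
    filter_upwards [hae] with ω hω
    show Real.exp (t * (X ω : ℝ)) = ∑ k ∈ Finset.range (N + 1),
      Set.indicator {ω' | X ω' = k} (fun _ => Real.exp (t * k)) ω
    rw [Finset.sum_eq_single (X ω)]
    · exact (Set.indicator_of_mem (show ω ∈ {ω' | X ω' = X ω} from rfl) (fun _ => Real.exp (t * (X ω : ℝ)))).symm
    · intro b _ hb
      refine Set.indicator_of_notMem (fun h => hb ?_) _
      exact (h : X ω = b).symm
    · intro h; exact absurd (Finset.mem_range.2 (Nat.lt_succ_of_le hω)) h
  have hint_g : Integrable g P := integrable_finset_sum _ hterm_int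
  have hint : Integrable (fun ω => Real.exp (t * (X ω : ℝ))) P := hint_g.congr hcongr.symm
  refine ⟨hint, ?_⟩
  have hInt_eq : mgf (fun ω => (X ω : ℝ)) P t
      = ∑ k ∈ Finset.range (N + 1),
          ((N.choose k : ℝ) * p ^ k * (1 - p) ^ (N - k)) * Real.exp (t * k) := by
    rw [mgf, integral_congr_ae hcongr, hg, integral_finset_sum _ hterm_int]
    refine Finset.sum_congr rfl fun k _ => ?_
    rw [integral_indicator_const _ (hmeasset k), measureReal_def, hdist k, ENNReal.toReal_ofReal (hnn k),
      smul_eq_mul]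
  rw [hInt_eq, add_pow]
  refine Finset.sum_congr rfl fun k _ => ?_
  rw [mul_pow, show Real.exp (t * k) = Real.exp t ^ k by rw [mul_comm, Real.exp_nat_mul]]
  ring

private lemma geom_Icc (c : ℝ) (d n : ℕ) :
    (c ^ d - 1) * ∑ i ∈ Finset.Icc 1 n, c ^ ((i - 1) * d) = c ^ (n * d) - 1 := by
  have h1 : ∑ i ∈ Finset.Icc 1 n, c ^ ((i - 1) * d) = ∑ j ∈ Finset.range n, (c ^ d) ^ j := by
    rw [← Finset.Ico_add_one_right_eq_Icc, Finset.sum_Ico_eq_sum_range]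
    simp only [Nat.add_sub_cancel_left, Nat.succ_sub_one]
    exact Finset.sum_congr rfl fun j _ => by rw [mul_comm j d, pow_mul]
  rw [h1, mul_comm, geom_sum_mul, ← pow_mul, mul_comm d n]

set_option maxHeartbeats 2000000 in
private lemma analysis_main (d L : ℕ) (hd : 1 ≤ d) (hL : 2 ≤ L)
    (A1 A2 α : ℝ) (hA1 : 0 < A1) (hA12 : A1 ≤ A2) (hα0 : 0 < α) (hαd : α < (d : ℝ))
    (ρ : ℝ → ℝ) (hρnn : ∀ r : ℝ, 0 ≤ r → 0 ≤ ρ r)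
    (hρlb : ∀ r : ℝ, 1 ≤ r → A1 * r ^ (-α) ≤ ρ r)
    (hρub : ∀ r : ℝ, 1 ≤ r → ρ r ≤ A2 * r ^ (-α))
    (θ : ℝ) (hθα : α < θ)
    (ζ : ℕ → ℝ) (hζpos : ∀ n : ℕ, 1 ≤ n → 0 < ζ n)
    (hζeq : ∀ n : ℕ, 1 ≤ n → zetaEq d L ρ n (ζ n)) :
    ∃ c3 : ℝ, 0 < c3 ∧ ∃ n₀ : ℕ, 1 ≤ n₀ ∧ ∀ n : ℕ, n₀ ≤ n →
      0 ≤ mjn d L θ ρ ζ n n ∧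
      c3 * (L : ℝ) ^ (-(n : ℝ) * (θ - α)) ≤ 1 - mjn d L θ ρ ζ n n := by
  set c : ℝ := (L : ℝ) with hc
  have hc1 : (1 : ℝ) < c := by
    rw [hc]; exact_mod_cast lt_of_lt_of_le one_lt_two (by exact_mod_cast hL)
  have hc0 : (0 : ℝ) < c := lt_trans one_pos hc1
  have hc2 : (2 : ℝ) ≤ c := by rw [hc]; exact_mod_cast hL
  have hcd2 : (2 : ℝ) ≤ c ^ d := le_trans hc2 (by
    calc c = c ^ 1 := (pow_one c).symm
    _ ≤ c ^ d := pow_le_pow_right₀ hc1.le hd)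
  have hcd1 : (0 : ℝ) < c ^ d - 1 := by linarith
  set D : ℝ := (d : ℝ) with hD
  have hDα : 0 < D - α := by rw [hD]; linarith
  set q : ℝ := c ^ (D - α) with hq
  have hq1 : 1 < q := by
    rw [hq]; exact Real.one_lt_rpow_iff_of_pos hc0 |>.2 (Or.inl ⟨hc1, hDα⟩)
  have hq0 : 0 < q := lt_trans one_pos hq1
  -- the geometric constant
  set C2 : ℝ := (c ^ d - 1) * A2 * c ^ (-D) * (q / (q - 1)) with hC2
  have hA2pos : 0 < A2 := lt_of_lt_of_le hA1 hA12
  have hC2pos : 0 < C2 := by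
    apply mul_pos (mul_pos (mul_pos hcd1 hA2pos) (Real.rpow_pos_of_pos hc0 _))
    exact div_pos hq0 (by linarith)
  -- choose n₀
  set r : ℝ := c ^ (θ - α) with hr
  have hr1 : 1 < r := by
    rw [hr]; exact Real.one_lt_rpow_iff_of_pos hc0 |>.2 (Or.inl ⟨hc1, by linarith⟩)
  obtain ⟨n₁, hn₁⟩ := Filter.eventually_atTop.1
    ((tendsto_pow_atTop_atTop_of_one_lt hr1).eventually_ge_atTop A1⁻¹)
  refine ⟨(c ^ d - 1) * c ^ (-D) * (1 / 2) * C2⁻¹, by positivity, max n₁ 2, le_max_of_le_right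
    (by norm_num), fun n hn => ?_⟩
  have hn1 : 1 ≤ n := le_trans (by norm_num) (le_trans (le_max_right n₁ 2) hn)
  have hn2 : 2 ≤ n := le_trans (le_max_right n₁ 2) hn
  have hnn₁ : n₁ ≤ n := le_trans (le_max_left n₁ 2) hn
  -- basic quantities
  set u : ℝ := (ζ n)⁻¹ with hu
  have hupos : 0 < u := inv_pos.2 (hζpos n hn1)
  set τ : ℝ := c ^ (-(n : ℝ) * θ) with hτ
  have hτ0 : 0 < τ := Real.rpow_pos_of_pos hc0 _
  have hρi : ∀ i : ℕ, 0 ≤ ρ (c ^ i) := fun i => hρnn _ (pow_nonneg hc0.le i)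
  set pfun : ℕ → ℝ := fun i => 1 - Real.exp (-u * ρ (c ^ i)) with hpfun
  have hp_nonneg : ∀ i : ℕ, 0 ≤ pfun i := fun i => by
    have : Real.exp (-u * ρ (c ^ i)) ≤ 1 := Real.exp_le_one_iff.2 (by
      have := hρi i; nlinarith)
    simp only [hpfun]; linarith
  have hpm_eq : ∀ i : ℕ, pMinus L θ ρ ζ n (c ^ i)
      = 1 - Real.exp (-u * max (ρ (c ^ i) - τ) 0) := fun i => rfl
  have hpm_nonneg : ∀ i : ℕ, 0 ≤ pMinus L θ ρ ζ n (c ^ i) := fun i => by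
    rw [hpm_eq]
    have : Real.exp (-u * max (ρ (c ^ i) - τ) 0) ≤ 1 := Real.exp_le_one_iff.2 (by
      have := le_max_right (ρ (c ^ i) - τ) 0; nlinarith [le_max_right (ρ (c ^ i) - τ) (0:ℝ)])
    linarith
  have hpm_le : ∀ i : ℕ, pMinus L θ ρ ζ n (c ^ i) ≤ pfun i := fun i => by
    rw [hpm_eq, hpfun]
    have hmax : max (ρ (c ^ i) - τ) 0 ≤ ρ (c ^ i) :=
      max_le (by linarith [hτ0]) (hρi i)
    have := Real.exp_le_exp.2 (show -u * ρ (c ^ i) ≤ -u * max (ρ (c ^ i) - τ) 0 by nlinarith)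
    simp only []; linarith
  -- key identity from the zeta equation
  have key1 : (c ^ d - 1) * ∑ i ∈ Finset.Icc 1 n, c ^ ((i - 1) * d) * pfun i = 1 := by
    have heq := hζeq n hn1
    rw [zetaEq] at heq
    have hsum : ∑ i ∈ Finset.Icc 1 n, c ^ ((i - 1) * d) * pfun i
        = (∑ i ∈ Finset.Icc 1 n, c ^ ((i - 1) * d))
          - ∑ i ∈ Finset.Icc 1 n, c ^ ((i - 1) * d) * Real.exp (-u * ρ (c ^ i)) := by
      rw [← Finset.sum_sub_distrib]
      exact Finset.sum_congr rfl fun i _ => by simp only [hpfun]; ring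
    rw [hsum, mul_sub, geom_Icc, heq]
    ring
  have hterm_nonneg : ∀ i ∈ Finset.Icc 1 n, 0 ≤ c ^ ((i - 1) * d) * pfun i := fun i _ =>
    mul_nonneg (pow_nonneg hc0.le _) (hp_nonneg i)
  have hnmem : n ∈ Finset.Icc 1 n := Finset.mem_Icc.2 ⟨hn1, le_refl n⟩
  -- single-term bound : (c^d-1) * (c^((n-1)d) * pfun n) ≤ 1
  have hsingle : (c ^ d - 1) * (c ^ ((n - 1) * d) * pfun n) ≤ 1 := by
    calc (c ^ d - 1) * (c ^ ((n - 1) * d) * pfun n)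
        ≤ (c ^ d - 1) * ∑ i ∈ Finset.Icc 1 n, c ^ ((i - 1) * d) * pfun i :=
          mul_le_mul_of_nonneg_left (Finset.single_le_sum hterm_nonneg hnmem) hcd1.le
    _ = 1 := key1
  have hpow_nd : c ^ ((n - 1) * d) * c ^ d = c ^ (n * d) := by
    rw [← pow_add]
    congr 1
    cases n with
    | zero => omega
    | succ k => simp [Nat.succ_sub_one, Nat.succ_mul]
  have hcnd_pos : (0 : ℝ) < c ^ (n * d) := pow_pos hc0 _
  have hcn1d_pos : (0 : ℝ) < c ^ ((n - 1) * d) := pow_pos hc0 _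
  have hpfn : pfun n ≤ 2 * (c ^ (n * d))⁻¹ := by
    have h1 : c ^ (n * d) / 2 ≤ (c ^ d - 1) * c ^ ((n - 1) * d) := by nlinarith
    have h2 := hp_nonneg n
    have hstep : c ^ (n * d) / 2 * pfun n ≤ 1 :=
      le_trans (by nlinarith [mul_le_mul_of_nonneg_right h1 h2]) hsingle
    rw [show (2:ℝ) * (c ^ (n * d))⁻¹ = 2 / c ^ (n * d) from (div_eq_mul_inv 2 _).symm,
      le_div_iff₀ hcnd_pos]
    nlinarith
  have hcnd4 : (4 : ℝ) ≤ c ^ (n * d) := by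
    have h1 : (4 : ℝ) ≤ 2 ^ n := by
      calc (4 : ℝ) = 2 ^ 2 := by norm_num
      _ ≤ 2 ^ n := pow_le_pow_right₀ one_le_two hn2
    calc (4 : ℝ) ≤ 2 ^ n := h1
    _ ≤ c ^ n := pow_le_pow_left₀ (by norm_num) hc2 n
    _ ≤ c ^ (n * d) := pow_le_pow_right₀ hc1.le (Nat.le_mul_of_pos_right n hd)
  have hexp_half : (1 : ℝ) / 2 ≤ Real.exp (-u * ρ (c ^ n)) := by
    have : pfun n ≤ 1 / 2 := by
      refine le_trans hpfn ?_
      rw [div_eq_mul_inv 1 (2:ℝ)]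
      nlinarith [inv_pos.2 hcnd_pos, mul_le_mul_of_nonneg_left hcnd4 (inv_pos.2 hcnd_pos).le,
        inv_mul_cancel₀ hcnd_pos.ne']
    simp only [hpfun] at this
    linarith
  -- lower bound on u
  have hone_le_ci : ∀ i : ℕ, (1 : ℝ) ≤ c ^ i := fun i => one_le_pow₀ hc1.le
  have hterm_ub : ∀ i ∈ Finset.Icc 1 n,
      c ^ ((i - 1) * d) * pfun i ≤ u * A2 * (c ^ (-D) * q ^ i) := by
    intro i hi
    have hi1 : 1 ≤ i := (Finset.mem_Icc.1 hi).1
    have hp_le : pfun i ≤ u * ρ (c ^ i) := by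
      have h := Real.add_one_le_exp (-u * ρ (c ^ i))
      simp only [hpfun]; nlinarith
    have hρ_le : ρ (c ^ i) ≤ A2 * (c ^ i) ^ (-α) := hρub _ (hone_le_ci i)
    have hpow_eq : c ^ ((i - 1) * d) * (c ^ i) ^ (-α) = c ^ (-D) * q ^ i := by
      rw [← Real.rpow_natCast c ((i - 1) * d), ← Real.rpow_natCast c i,
        ← Real.rpow_mul hc0.le, ← Real.rpow_add hc0, hq,
        ← Real.rpow_natCast (c ^ (D - α)) i, ← Real.rpow_mul hc0.le, ← Real.rpow_add hc0]
      congr 1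
      have : ((i - 1 : ℕ) : ℝ) = (i : ℝ) - 1 := by
        have := Nat.cast_sub hi1 (R := ℝ); simpa using this
      push_cast [this]
      ring
    have hp_le2 : pfun i ≤ u * (A2 * (c ^ i) ^ (-α)) := by nlinarith
    calc c ^ ((i - 1) * d) * pfun i ≤ c ^ ((i - 1) * d) * (u * (A2 * (c ^ i) ^ (-α))) :=
          mul_le_mul_of_nonneg_left hp_le2 (pow_nonneg hc0.le _)
    _ = u * A2 * (c ^ ((i - 1) * d) * (c ^ i) ^ (-α)) := by ring
    _ = u * A2 * (c ^ (-D) * q ^ i) := by rw [hpow_eq]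
  have hsum_q : ∑ i ∈ Finset.Icc 1 n, q ^ i ≤ q ^ n * (q / (q - 1)) := by
    have hsub : Finset.Icc 1 n ⊆ Finset.range (n + 1) := fun i hi =>
      Finset.mem_range.2 (Nat.lt_succ_of_le (Finset.mem_Icc.1 hi).2)
    have h1 : ∑ i ∈ Finset.Icc 1 n, q ^ i ≤ ∑ i ∈ Finset.range (n + 1), q ^ i :=
      Finset.sum_le_sum_of_subset_of_nonneg hsub (fun i _ _ => (pow_pos hq0 i).le)
    have h2 : ∑ i ∈ Finset.range (n + 1), q ^ i = (q ^ (n + 1) - 1) / (q - 1) :=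
      geom_sum_eq hq1.ne' (n + 1)
    have hq1' : (0 : ℝ) < q - 1 := by linarith
    calc ∑ i ∈ Finset.Icc 1 n, q ^ i ≤ (q ^ (n + 1) - 1) / (q - 1) := by rw [← h2]; exact h1
    _ ≤ q ^ (n + 1) / (q - 1) := (div_le_div_iff_of_pos_right hq1').2 (by linarith)
    _ = q ^ n * (q / (q - 1)) := by rw [pow_succ]; ring
  have hu_lb : C2⁻¹ * (q ^ n)⁻¹ ≤ u := by
    have h1 : 1 ≤ (c ^ d - 1) * ∑ i ∈ Finset.Icc 1 n, (u * A2 * (c ^ (-D) * q ^ i)) := by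
      calc (1:ℝ) = (c ^ d - 1) * ∑ i ∈ Finset.Icc 1 n, c ^ ((i - 1) * d) * pfun i := key1.symm
      _ ≤ _ := mul_le_mul_of_nonneg_left (Finset.sum_le_sum hterm_ub) hcd1.le
    have h2 : ∑ i ∈ Finset.Icc 1 n, (u * A2 * (c ^ (-D) * q ^ i))
        = u * A2 * c ^ (-D) * ∑ i ∈ Finset.Icc 1 n, q ^ i := by
      rw [Finset.mul_sum]
      exact Finset.sum_congr rfl fun i _ => by ring
    have h3 : 1 ≤ u * (C2 * q ^ n) := by
      rw [h2] at h1
      have h4 : (c ^ d - 1) * (u * A2 * c ^ (-D) * ∑ i ∈ Finset.Icc 1 n, q ^ i)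
          ≤ (c ^ d - 1) * (u * A2 * c ^ (-D) * (q ^ n * (q / (q - 1)))) := by
        apply mul_le_mul_of_nonneg_left _ hcd1.le
        apply mul_le_mul_of_nonneg_left hsum_q
        positivity
      calc (1:ℝ) ≤ _ := h1
      _ ≤ _ := h4
      _ = u * (C2 * q ^ n) := by rw [hC2]; ring
    have hqn : (0:ℝ) < C2 * q ^ n := mul_pos hC2pos (pow_pos hq0 n)
    rw [← mul_inv, ← one_div, div_le_iff₀ hqn]
    linarith
  -- τ ≤ ρ(c^n)
  have hτρ : τ ≤ ρ (c ^ n) := by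
    have hr_n : A1⁻¹ ≤ r ^ n := hn₁ n hnn₁
    have h1 : 1 ≤ A1 * r ^ n := by
      rw [← mul_inv_cancel₀ hA1.ne']
      exact mul_le_mul_of_nonneg_left hr_n hA1.le
    have hrn_eq : r ^ n = c ^ ((n : ℝ) * (θ - α)) := by
      rw [hr, ← Real.rpow_natCast (c ^ (θ - α)) n, ← Real.rpow_mul hc0.le, mul_comm]
    have h2 : τ ≤ A1 * (c ^ n) ^ (-α) := by
      have h3 : τ * 1 ≤ τ * (A1 * r ^ n) := mul_le_mul_of_nonneg_left h1 hτ0.le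
      rw [mul_one] at h3
      refine le_trans h3 (le_of_eq ?_)
      rw [hrn_eq, hτ, ← Real.rpow_natCast c n, ← Real.rpow_mul hc0.le,
        ← mul_assoc, mul_comm (c ^ (-(n:ℝ) * θ)), mul_assoc, ← Real.rpow_add hc0]
      congr 2
      ring
    exact le_trans h2 (hρlb _ (hone_le_ci n))
  -- gap lower bound
  have hrhoMinus_n : rhoMinus L θ ρ n (c ^ n) = ρ (c ^ n) - τ := by
    rw [rhoMinus, ← hc, ← hτ]
    exact max_eq_left (by linarith)
  have hdiff : (1 : ℝ) / 2 * (u * τ) ≤ pfun n - pMinus L θ ρ ζ n (c ^ n) := by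
    have h1 : pfun n - pMinus L θ ρ ζ n (c ^ n)
        = Real.exp (-u * (ρ (c ^ n) - τ)) - Real.exp (-u * ρ (c ^ n)) := by
      rw [hpm_eq]
      rw [show max (ρ (c ^ n) - τ) 0 = ρ (c ^ n) - τ from max_eq_left (by linarith)]
      simp only [hpfun]
      ring
    have h2 : Real.exp (-u * (ρ (c ^ n) - τ))
        = Real.exp (-u * ρ (c ^ n)) * Real.exp (u * τ) := by
      rw [← Real.exp_add]; ring_nf
    have h3 : u * τ ≤ Real.exp (u * τ) - 1 := by
      have := Real.add_one_le_exp (u * τ); linarith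
    rw [h1, h2]
    have huτ : 0 ≤ u * τ := by positivity
    nlinarith [hexp_half, Real.exp_pos (-u * ρ (c ^ n)),
      mul_le_mul hexp_half h3 huτ (Real.exp_pos (-u * ρ (c ^ n))).le]
  have hgap : (c ^ d - 1) * (c ^ ((n - 1) * d) * (pfun n - pMinus L θ ρ ζ n (c ^ n)))
      ≤ 1 - mjn d L θ ρ ζ n n := by
    have hm_eq : 1 - mjn d L θ ρ ζ n n
        = (c ^ d - 1) * ∑ i ∈ Finset.Icc 1 n,
            c ^ ((i - 1) * d) * (pfun i - pMinus L θ ρ ζ n (c ^ i)) := by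
      rw [mjn, ← hc]
      have : ∑ i ∈ Finset.Icc 1 n, c ^ ((i - 1) * d) * (pfun i - pMinus L θ ρ ζ n (c ^ i))
          = (∑ i ∈ Finset.Icc 1 n, c ^ ((i - 1) * d) * pfun i)
            - ∑ i ∈ Finset.Icc 1 n, c ^ ((i - 1) * d) * pMinus L θ ρ ζ n (c ^ i) := by
        rw [← Finset.sum_sub_distrib]
        exact Finset.sum_congr rfl fun i _ => by ring
      rw [this, mul_sub, key1]
    rw [hm_eq]
    apply mul_le_mul_of_nonneg_left _ hcd1.le
    exact Finset.single_le_sum (f := fun i => c ^ ((i - 1) * d) * (pfun i - pMinus L θ ρ ζ n (c ^ i)))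
      (fun i _ => mul_nonneg (pow_nonneg hc0.le _) (by linarith [hpm_le i])) hnmem
  -- m ≥ 0
  have hm0 : 0 ≤ mjn d L θ ρ ζ n n := by
    rw [mjn, ← hc]
    exact mul_nonneg hcd1.le (Finset.sum_nonneg fun i _ =>
      mul_nonneg (pow_nonneg hc0.le _) (hpm_nonneg i))
  refine ⟨hm0, ?_⟩
  -- power bookkeeping
  have hpow_comb : c ^ ((n - 1) * d) * ((q ^ n)⁻¹ * τ)
      = c ^ (-D) * c ^ (-(n : ℝ) * (θ - α)) := by
    have h1 : ((n - 1 : ℕ) : ℝ) = (n : ℝ) - 1 := by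
      have := Nat.cast_sub hn1 (R := ℝ); simpa using this
    rw [← Real.rpow_natCast c ((n - 1) * d), hq, ← Real.rpow_natCast (c ^ (D - α)) n,
      ← Real.rpow_mul hc0.le, ← Real.rpow_neg hc0.le, hτ,
      ← Real.rpow_add hc0, ← Real.rpow_add hc0, ← Real.rpow_add hc0]
    congr 1
    push_cast [h1]
    rw [hD]
    ring
  calc (c ^ d - 1) * c ^ (-D) * (1 / 2) * C2⁻¹ * c ^ (-(n : ℝ) * (θ - α))
      = (c ^ d - 1) * (c ^ ((n - 1) * d) * ((1 : ℝ) / 2 * ((C2⁻¹ * (q ^ n)⁻¹) * τ))) := by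
        rw [show (c ^ d - 1) * (c ^ ((n - 1) * d) * ((1 : ℝ) / 2 * ((C2⁻¹ * (q ^ n)⁻¹) * τ)))
          = (c ^ d - 1) * (1 / 2) * C2⁻¹ * (c ^ ((n - 1) * d) * ((q ^ n)⁻¹ * τ)) by ring,
          hpow_comb]
        ring
  _ ≤ (c ^ d - 1) * (c ^ ((n - 1) * d) * ((1 : ℝ) / 2 * (u * τ))) := by
        apply mul_le_mul_of_nonneg_left _ hcd1.le
        apply mul_le_mul_of_nonneg_left _ hcn1d_pos.le
        apply mul_le_mul_of_nonneg_left _ (by norm_num : (0:ℝ) ≤ 1/2)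
        exact mul_le_mul_of_nonneg_right hu_lb hτ0.le
  _ ≤ (c ^ d - 1) * (c ^ ((n - 1) * d) * (pfun n - pMinus L θ ρ ζ n (c ^ n))) := by
        apply mul_le_mul_of_nonneg_left _ hcd1.le
        exact mul_le_mul_of_nonneg_left hdiff hcn1d_pos.le
  _ ≤ 1 - mjn d L θ ρ ζ n n := hgap

private lemma pMinus_bounds (L : ℕ) (θ : ℝ) (ρ : ℝ → ℝ) (ζ : ℕ → ℝ) (n : ℕ)
    (hζ : 0 < ζ n) (r : ℝ) :
    0 ≤ pMinus L θ ρ ζ n r ∧ pMinus L θ ρ ζ n r ≤ 1 := by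
  have h0 : 0 ≤ rhoMinus L θ ρ n r := le_max_right _ _
  have hzu : 0 ≤ (ζ n)⁻¹ := (inv_pos.2 hζ).le
  constructor
  · have : Real.exp (-(ζ n)⁻¹ * rhoMinus L θ ρ n r) ≤ 1 :=
      Real.exp_le_one_iff.2 (by nlinarith)
    rw [pMinus]; linarith
  · rw [pMinus]; linarith [Real.exp_pos (-(ζ n)⁻¹ * rhoMinus L θ ρ n r)]

private lemma pow_shift (c : ℝ) (d j : ℕ) (hj : 1 ≤ j) :
    c ^ ((j - 1) * d) * c ^ d = c ^ (j * d) := by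
  rw [← pow_add]
  congr 1
  cases j with
  | zero => omega
  | succ k => simp [Nat.succ_sub_one, Nat.succ_mul]

private lemma mean_eq (d L : ℕ) (hL : 1 ≤ L) (θ : ℝ) (ρ : ℝ → ℝ) (ζ : ℕ → ℝ) (n : ℕ) :
    ∑ j ∈ Finset.Icc 1 n,
        ((L ^ (j * d) - L ^ ((j - 1) * d) : ℕ) : ℝ) * pMinus L θ ρ ζ n ((L : ℝ) ^ j)
      = mjn d L θ ρ ζ n n := by
  rw [mjn, Finset.mul_sum]
  refine Finset.sum_congr rfl fun j hj => ?_
  have hj1 : 1 ≤ j := (Finset.mem_Icc.1 hj).1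
  have hle : L ^ ((j - 1) * d) ≤ L ^ (j * d) :=
    Nat.pow_le_pow_right hL (Nat.mul_le_mul (Nat.sub_le j 1) (le_refl d))
  have hcast : ((L ^ (j * d) - L ^ ((j - 1) * d) : ℕ) : ℝ)
      = (L : ℝ) ^ (j * d) - (L : ℝ) ^ ((j - 1) * d) := by
    rw [Nat.cast_sub hle]; push_cast; ring
  rw [hcast, ← pow_shift (L : ℝ) d j hj1]
  ring

end Aux

set_option maxHeartbeats 2000000 in
/-- For i.i.d. copies `V₁, …, V_k` of `W₁^{(n)}`, the probability that the
random walk with steps `V_i - 1` stays above `-1` up to time `k` is at most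
`P(∑_{i=1}^k V_i ≥ k) ≤ exp(-c k L^{-2n(θ-α)})`. -/
theorem total_progeny_tail_bound
    (d L : ℕ) (hd : 1 ≤ d) (hL : 2 ≤ L)
    (A1 A2 α : ℝ) (hA1 : 0 < A1) (hA12 : A1 ≤ A2)
    (hα0 : 0 < α) (hαd : α < (d : ℝ))
    (ρ : ℝ → ℝ) (hρ0 : ρ 0 = 0)
    (hρnn : ∀ r : ℝ, 0 ≤ r → 0 ≤ ρ r)
    (hρlb : ∀ r : ℝ, 1 ≤ r → A1 * r ^ (-α) ≤ ρ r)
    (hρub : ∀ r : ℝ, 1 ≤ r → ρ r ≤ A2 * r ^ (-α))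
    (θ : ℝ) (hα56 : α < 5 * (d : ℝ) / 6) (hθα : α < θ)
    (hθ1 : α ≤ (d : ℝ) / 2 → θ < 4 * α / 3)
    (hθ2 : (d : ℝ) / 2 < α → α ≤ 2 * (d : ℝ) / 3 → θ < 2 * α - (d : ℝ) / 2)
    (hθ3 : 2 * (d : ℝ) / 3 < α → θ < 5 * α / 2 - (d : ℝ))
    (ζ : ℕ → ℝ) (hζpos : ∀ n : ℕ, 1 ≤ n → 0 < ζ n)
    (hζeq : ∀ n : ℕ, 1 ≤ n → zetaEq d L ρ n (ζ n))
    {Ω : Type} [MeasurableSpace Ω] (P : Measure Ω) [IsProbabilityMeasure P]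
    (X : ℕ → ℕ → Ω → ℕ)
    (hXmeas : ∀ n i, Measurable (X n i))
    (hXindep : ∀ n : ℕ, iIndepFun (X n) P)
    (hXdist : ∀ n i : ℕ, 1 ≤ i → i ≤ n → ∀ k : ℕ,
      P {ω | X n i ω = k} =
        ENNReal.ofReal (((L ^ (i * d) - L ^ ((i - 1) * d)).choose k : ℝ) *
          pMinus L θ ρ ζ n ((L : ℝ) ^ i) ^ k *
          (1 - pMinus L θ ρ ζ n ((L : ℝ) ^ i)) ^ (L ^ (i * d) - L ^ ((i - 1) * d) - k)))
 :
    ∃ c : ℝ, 0 < c ∧ ∃ n₀ : ℕ, 1 ≤ n₀ ∧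
      ∀ n : ℕ, n₀ ≤ n → ∀ k : ℕ, 1 ≤ k →
      ∀ (Ω' : Type) [MeasurableSpace Ω'] (P' : Measure Ω'), IsProbabilityMeasure P' →
      ∀ V : ℕ → Ω' → ℕ, (∀ i, Measurable (V i)) →
        iIndepFun V P' →
        (∀ i : ℕ, Measure.map (V i) P' =
          Measure.map (fun ω => ∑ j ∈ Finset.Icc 1 n, X n j ω) P) →
        P' {ω | ∀ j ∈ Finset.Icc 1 k, (-1 : ℤ) < ∑ i ∈ Finset.Icc 1 j, ((V i ω : ℤ) - 1)} ≤
            P' {ω | k ≤ ∑ i ∈ Finset.Icc 1 k, V i ω} ∧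
          P' {ω | k ≤ ∑ i ∈ Finset.Icc 1 k, V i ω} ≤
            ENNReal.ofReal (Real.exp (-c * (k : ℝ) * (L : ℝ) ^ (-(2 * (n : ℝ)) * (θ - α)))) := by
  obtain ⟨c3, hc3, n₀, hn₀1, hmain⟩ := analysis_main d L hd hL A1 A2 α hA1 hA12 hα0 hαd
    ρ hρnn hρlb hρub θ hθα ζ hζpos hζeq
  refine ⟨3 / 16 * c3 ^ 2, by positivity, n₀, hn₀1, fun n hn k hk Ω' _ P' hP' V hVmeas
    hVindep hVdist => ?_⟩
  haveI := hP'
  have hn1 : 1 ≤ n := le_trans hn₀1 hn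
  have hL1 : (1 : ℝ) < (L : ℝ) := by exact_mod_cast lt_of_lt_of_le one_lt_two hL
  have hL0 : (0 : ℝ) < (L : ℝ) := lt_trans one_pos hL1
  obtain ⟨hm0, hgap⟩ := hmain n hn
  set m : ℝ := mjn d L θ ρ ζ n n with hm
  set E : ℝ := (L : ℝ) ^ (-(n : ℝ) * (θ - α)) with hE
  have hEpos : 0 < E := Real.rpow_pos_of_pos hL0 _
  set δ : ℝ := 1 - m with hδ
  have hδpos : 0 < δ := lt_of_lt_of_le (by positivity) hgap
  have hδ1 : δ ≤ 1 := by rw [hδ]; linarith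
  set t : ℝ := δ / 4 with ht
  have ht0 : 0 < t := by rw [ht]; linarith
  have ht1 : t ≤ 1 := by rw [ht]; linarith
  constructor
  · -- running minimum event is contained in the total-sum event
    apply measure_mono
    intro ω hω
    have h := hω k (Finset.mem_Icc.2 ⟨hk, le_refl k⟩)
    have hsum : ∑ i ∈ Finset.Icc 1 k, ((V i ω : ℤ) - 1)
        = (∑ i ∈ Finset.Icc 1 k, (V i ω : ℤ)) - k := by
      rw [Finset.sum_sub_distrib, Finset.sum_const, Nat.card_Icc]
      simp
    rw [hsum] at h
    have h2 : (k : ℤ) ≤ ∑ i ∈ Finset.Icc 1 k, (V i ω : ℤ) := by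
      have := Int.add_one_le_of_lt h
      linarith
    have h3 : (k : ℤ) ≤ ((∑ i ∈ Finset.Icc 1 k, V i ω : ℕ) : ℤ) := by
      push_cast
      exact h2
    exact_mod_cast h3
  -- Chernoff bound
  · set Xr : ℕ → Ω → ℝ := fun j ω => (X n j ω : ℝ) with hXr
    have hXrmeas : ∀ j, Measurable (Xr j) := fun j =>
      (measurable_of_countable _).comp (hXmeas n j)
    have hXrindep : iIndepFun Xr P :=
      (hXindep n).comp _ (fun j => measurable_of_countable _)
    have hζn := hζpos n hn1
    have hpj : ∀ j : ℕ, 0 ≤ pMinus L θ ρ ζ n ((L : ℝ) ^ j) ∧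
        pMinus L θ ρ ζ n ((L : ℝ) ^ j) ≤ 1 := fun j =>
      pMinus_bounds L θ ρ ζ n hζn _
    have hbin : ∀ j, 1 ≤ j → j ≤ n →
        Integrable (fun ω => Real.exp (t * (X n j ω : ℝ))) P ∧
          mgf (Xr j) P t = (pMinus L θ ρ ζ n ((L : ℝ) ^ j) * Real.exp t
            + (1 - pMinus L θ ρ ζ n ((L : ℝ) ^ j))) ^ (L ^ (j * d) - L ^ ((j - 1) * d)) :=
      fun j hj1 hjn =>
        binomial_facts P (X n j) (hXmeas n j) (L ^ (j * d) - L ^ ((j - 1) * d))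
          (pMinus L θ ρ ζ n ((L : ℝ) ^ j)) (hpj j).1 (hpj j).2 (hXdist n j hj1 hjn) t
    -- the total progeny variable and its real version
    set W : Ω → ℕ := fun ω => ∑ j ∈ Finset.Icc 1 n, X n j ω with hW
    set Wr : Ω → ℝ := fun ω => (W ω : ℝ) with hWr
    have hWmeas : Measurable W := Finset.measurable_sum _ (fun j _ => hXmeas n j)
    have hWrmeas : Measurable Wr := (measurable_of_countable _).comp hWmeas
    have hWr_sum : Wr = ∑ j ∈ Finset.Icc 1 n, Xr j := by
      funext ω
      rw [hWr, hW]
      simp only [Finset.sum_apply, hXr]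
      push_cast
      rfl
    have hWint : Integrable (fun ω => Real.exp (t * Wr ω)) P := by
      rw [hWr_sum]
      exact hXrindep.integrable_exp_mul_sum hXrmeas
        (fun j hj => (hbin j (Finset.mem_Icc.1 hj).1 (Finset.mem_Icc.1 hj).2).1)
    -- bound on the mgf of W
    have hmgfW : mgf Wr P t ≤ Real.exp ((Real.exp t - 1) * m) := by
      have h1 : mgf Wr P t = ∏ j ∈ Finset.Icc 1 n, mgf (Xr j) P t := by
        rw [hWr_sum]; exact hXrindep.mgf_sum hXrmeas _
      have h2 : ∀ j ∈ Finset.Icc 1 n, mgf (Xr j) P t ≤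
          Real.exp (((L ^ (j * d) - L ^ ((j - 1) * d) : ℕ) : ℝ)
            * (pMinus L θ ρ ζ n ((L : ℝ) ^ j) * (Real.exp t - 1))) := by
        intro j hj
        obtain ⟨hj1, hjn⟩ := Finset.mem_Icc.1 hj
        rw [(hbin j hj1 hjn).2]
        set p : ℝ := pMinus L θ ρ ζ n ((L : ℝ) ^ j) with hp
        have hbase0 : 0 ≤ p * Real.exp t + (1 - p) := by
          nlinarith [(hpj j).1, (hpj j).2, Real.exp_pos t]
        have hbase : p * Real.exp t + (1 - p) ≤ Real.exp (p * (Real.exp t - 1)) := by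
          have := Real.add_one_le_exp (p * (Real.exp t - 1))
          nlinarith
        calc (p * Real.exp t + (1 - p)) ^ (L ^ (j * d) - L ^ ((j - 1) * d))
            ≤ (Real.exp (p * (Real.exp t - 1))) ^ (L ^ (j * d) - L ^ ((j - 1) * d)) :=
              pow_le_pow_left₀ hbase0 hbase _
        _ = Real.exp (((L ^ (j * d) - L ^ ((j - 1) * d) : ℕ) : ℝ)
              * (p * (Real.exp t - 1))) := by
            rw [← Real.exp_nat_mul]
      calc mgf Wr P t = ∏ j ∈ Finset.Icc 1 n, mgf (Xr j) P t := h1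
      _ ≤ ∏ j ∈ Finset.Icc 1 n, Real.exp (((L ^ (j * d) - L ^ ((j - 1) * d) : ℕ) : ℝ)
            * (pMinus L θ ρ ζ n ((L : ℝ) ^ j) * (Real.exp t - 1))) :=
          Finset.prod_le_prod (fun j _ => mgf_nonneg) h2
      _ = Real.exp (∑ j ∈ Finset.Icc 1 n, ((L ^ (j * d) - L ^ ((j - 1) * d) : ℕ) : ℝ)
            * (pMinus L θ ρ ζ n ((L : ℝ) ^ j) * (Real.exp t - 1))) :=
          (Real.exp_sum _ _).symm
      _ = Real.exp ((Real.exp t - 1) * m) := by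
          congr 1
          rw [hm, ← mean_eq d L (by omega) θ ρ ζ n, Finset.mul_sum]
          exact Finset.sum_congr rfl fun j _ => by ring
    -- transfer to the i.i.d. copies
    set Y : ℕ → Ω' → ℝ := fun i ω => (V i ω : ℝ) with hY
    have hYmeas : ∀ i, Measurable (Y i) := fun i =>
      (measurable_of_countable _).comp (hVmeas i)
    have hYindep : iIndepFun Y P' :=
      hVindep.comp _ (fun i => measurable_of_countable _)
    have hexpmeas : Measurable fun x : ℝ => Real.exp (t * x) :=
      (measurable_id.const_mul t).exp
    have hmap : ∀ i, Measure.map (Y i) P' = Measure.map Wr P := fun i => by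
      rw [show Y i = (Nat.cast : ℕ → ℝ) ∘ (V i) from rfl,
        ← Measure.map_map (measurable_of_countable _) (hVmeas i), hVdist i,
        Measure.map_map (measurable_of_countable _) hWmeas]
      rfl
    have hYint : ∀ i, Integrable (fun ω => Real.exp (t * Y i ω)) P' := fun i => by
      have h1 : Integrable (fun x : ℝ => Real.exp (t * x)) (Measure.map Wr P) := by
        rw [integrable_map_measure hexpmeas.aestronglyMeasurable hWrmeas.aemeasurable]
        exact hWint
      have h2 : Integrable (fun x : ℝ => Real.exp (t * x)) (Measure.map (Y i) P') := by
        rw [hmap i]; exact h1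
      exact (integrable_map_measure hexpmeas.aestronglyMeasurable
        (hYmeas i).aemeasurable).1 h2
    have hmgfY : ∀ i, mgf (Y i) P' t = mgf Wr P t := fun i => by
      rw [mgf, mgf,
        ← integral_map (hYmeas i).aemeasurable hexpmeas.aestronglyMeasurable,
        ← integral_map hWrmeas.aemeasurable hexpmeas.aestronglyMeasurable, hmap i]
    -- Chernoff
    have hSint : Integrable
        (fun ω => Real.exp (t * (∑ i ∈ Finset.Icc 1 k, Y i) ω)) P' :=
      hYindep.integrable_exp_mul_sum hYmeas (fun i _ => hYint i)
    have hchern := measure_ge_le_exp_mul_mgf (μ := P') (X := ∑ i ∈ Finset.Icc 1 k, Y i)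
      (k : ℝ) ht0.le hSint
    have hmgfS : mgf (∑ i ∈ Finset.Icc 1 k, Y i) P' t = (mgf Wr P t) ^ k := by
      rw [hYindep.mgf_sum hYmeas, Finset.prod_congr rfl (fun i _ => hmgfY i),
        Finset.prod_const, Nat.card_Icc]
      simp
    have hset : {ω | k ≤ ∑ i ∈ Finset.Icc 1 k, V i ω}
        = {ω | (k : ℝ) ≤ (∑ i ∈ Finset.Icc 1 k, Y i) ω} := by
      ext ω
      simp only [Set.mem_setOf_eq, Finset.sum_apply, hY]
      rw [← Nat.cast_sum, Nat.cast_le]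
    -- numeric estimates
    have hexpt : Real.exp t - 1 ≤ t + t ^ 2 := by
      have habs : |t| ≤ 1 := by rw [abs_of_pos ht0]; exact ht1
      have h := Real.exp_bound habs (n := 2) (by norm_num)
      have h2 : ∑ i ∈ Finset.range 2, t ^ i / (Nat.factorial i : ℝ) = 1 + t := by
        simp [Finset.sum_range_succ]
      rw [h2] at h
      have h3 := (abs_le.1 h).2
      have h4 : |t| ^ 2 = t ^ 2 := sq_abs t
      norm_num at h3
      nlinarith [sq_nonneg t]
    have hG0 : 0 ≤ mgf Wr P t := mgf_nonneg
    have hδE : c3 * E ≤ δ := hgap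
    have hE2 : (L : ℝ) ^ (-(2 * (n : ℝ)) * (θ - α)) = E ^ 2 := by
      rw [hE, ← Real.rpow_natCast ((L : ℝ) ^ (-(n : ℝ) * (θ - α))) 2,
        ← Real.rpow_mul hL0.le]
      norm_num
      ring_nf
    have hkey : (k : ℝ) * ((Real.exp t - 1) * m - t)
        ≤ -(3 / 16 * c3 ^ 2) * (k : ℝ) * E ^ 2 := by
      have hk0 : (0 : ℝ) ≤ k := Nat.cast_nonneg k
      have hδ2 : c3 ^ 2 * E ^ 2 ≤ δ ^ 2 := by
        have h6 := mul_self_le_mul_self (mul_pos hc3 hEpos).le hδE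
        nlinarith [h6]
      have hcore : (Real.exp t - 1) * m - t ≤ -(3 / 16) * δ ^ 2 := by
        have hme : m = 1 - δ := by rw [hδ]; ring
        have hexp1 : 0 ≤ Real.exp t - 1 := by
          have := Real.one_le_exp ht0.le; linarith
        nlinarith [sq_nonneg t, sq_nonneg δ]
      have h5 : (Real.exp t - 1) * m - t ≤ -(3 / 16) * (c3 ^ 2 * E ^ 2) := by nlinarith
      calc (k : ℝ) * ((Real.exp t - 1) * m - t)
          ≤ (k : ℝ) * (-(3 / 16) * (c3 ^ 2 * E ^ 2)) :=
            mul_le_mul_of_nonneg_left h5 hk0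
      _ = -(3 / 16 * c3 ^ 2) * (k : ℝ) * E ^ 2 := by ring
    have hfinal : (P' {ω | k ≤ ∑ i ∈ Finset.Icc 1 k, V i ω}).toReal
        ≤ Real.exp (-(3 / 16 * c3 ^ 2) * (k : ℝ) * (L : ℝ) ^ (-(2 * (n : ℝ)) * (θ - α))) := by
      rw [hset]
      calc (P' {ω | (k : ℝ) ≤ (∑ i ∈ Finset.Icc 1 k, Y i) ω}).toReal
          ≤ Real.exp (-t * k) * mgf (∑ i ∈ Finset.Icc 1 k, Y i) P' t := hchern
      _ = Real.exp (-t * k) * (mgf Wr P t) ^ k := by rw [hmgfS]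
      _ ≤ Real.exp (-t * k) * (Real.exp ((Real.exp t - 1) * m)) ^ k := by
          apply mul_le_mul_of_nonneg_left _ (Real.exp_pos _).le
          exact pow_le_pow_left₀ hG0 hmgfW k
      _ = Real.exp ((k : ℝ) * ((Real.exp t - 1) * m - t)) := by
          rw [← Real.exp_nat_mul, ← Real.exp_add]
          congr 1
          ring
      _ ≤ Real.exp (-(3 / 16 * c3 ^ 2) * (k : ℝ) * (L : ℝ) ^ (-(2 * (n : ℝ)) * (θ - α))) := by
          apply Real.exp_le_exp.2
          rw [hE2]
          exact hkey
    exact (ENNReal.le_ofReal_iff_toReal_le (measure_ne_top _ _)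
      (Real.exp_nonneg _)).2 hfinal

end
end
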